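/- arXiv:1608.05489 — 9 statements merged into one kernel-verified Lean document; each statement's English description precedes it below -/
import Mathlib

section
/- If (x_α) is an increasing net in a normed lattice X and x_α un-converges to x (i.e., |x_α − x| ∧ u converges to 0 in norm for every u ∈ X₊), then x_α ↑ x and x_α converges to x in norm. -/
open Filter Topology

/-- The filter of un-neighborhoods of zero in a normed lattice,
generated by the sets `V_{ε,u} = {x : ‖|x| ⊓ u‖ < ε}`. -/
def unNhdsZero (X : Type*) [NormedAddCommGroup X] [Lattice X] [HasSolidNorm X] [IsOrderedAddMonoid X] : Filter X :=
  ⨅ (ε : ℝ) (_ : 0 < ε) (u : X) (_ : 0 ≤ u) (_ : u ≠ 0),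
    Filter.principal {x : X | ‖|x| ⊓ u‖ < ε}

/-- The un-topology on a normed lattice. -/
def unTopology (X : Type*) [NormedAddCommGroup X] [Lattice X] [HasSolidNorm X] [IsOrderedAddMonoid X] : TopologicalSpace X :=
  TopologicalSpace.mkOfNhds fun x => Filter.map (fun y => x + y) (unNhdsZero X)

/-- A net `f` un-converges to `x` if `‖|f i - x| ⊓ u‖ → 0` for every `u ≥ 0`. -/
def UnTendsto {ι X : Type*} [NormedAddCommGroup X] [Lattice X] [HasSolidNorm X] [IsOrderedAddMonoid X]
    (f : ι → X) (l : Filter ι) (x : X) : Prop :=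
  ∀ u : X, 0 ≤ u → Tendsto (fun i => ‖|f i - x| ⊓ u‖) l (𝓝 0)

/-- If an increasing net un-converges to `x`, then `x` is its supremum and it
converges to `x` in norm. -/
theorem increasing_unTendsto_isLUB_and_norm_tendsto
    {ι X : Type*} [SemilatticeSup ι] [Nonempty ι] [NormedAddCommGroup X] [Lattice X] [HasSolidNorm X] [IsOrderedAddMonoid X]
    (f : ι → X) (x : X) (hmono : Monotone f)
    (h : UnTendsto f Filter.atTop x) :
    IsLUB (Set.range f) x ∧ Tendsto f Filter.atTop (𝓝 x) := by
  -- every `f i` is below `x`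
  have hle : ∀ i, f i ≤ x := by
    intro i
    set u : X := (f i - x)⁺ with hu
    have hu0 : 0 ≤ u := le_sup_right
    have htend := h u hu0
    have hev : ∀ᶠ j in atTop, ‖|f j - x| ⊓ u‖ = ‖u‖ := by
      filter_upwards [eventually_ge_atTop i] with j hj
      have h1 : u ≤ (f j - x)⁺ := sup_le_sup_right (by simpa using hmono hj) 0
      have h2 : (f j - x)⁺ ≤ |f j - x| := sup_le (le_abs_self _) (abs_nonneg _)
      rw [inf_eq_right.mpr (h1.trans h2)]
    have : Tendsto (fun _ : ι => ‖u‖) atTop (𝓝 0) := htend.congr' hev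
    have hnorm : ‖u‖ = 0 := tendsto_nhds_unique tendsto_const_nhds this
    have hu0' : u = 0 := norm_eq_zero.mp hnorm
    have hp : (f i - x)⁺ = 0 := hu ▸ hu0'
    exact sub_nonpos.mp (posPart_eq_zero.mp hp)
  -- norm convergence
  obtain ⟨i₀⟩ : Nonempty ι := inferInstance
  have hu0 : 0 ≤ x - f i₀ := sub_nonneg.mpr (hle i₀)
  have htend := h (x - f i₀) hu0
  have hev : ∀ᶠ j in atTop, ‖|f j - x| ⊓ (x - f i₀)‖ = ‖f j - x‖ := by
    filter_upwards [eventually_ge_atTop i₀] with j hj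
    have habs : |f j - x| = x - f j := by
      rw [abs_of_nonpos (sub_nonpos.mpr (hle j)), neg_sub]
    have hle' : x - f j ≤ x - f i₀ := sub_le_sub_left (hmono hj) x
    rw [habs, inf_eq_left.mpr hle', ← norm_neg, neg_sub]
  have hnorm : Tendsto (fun j => ‖f j - x‖) atTop (𝓝 0) :=
    (htend.congr' hev)
  have htendsto : Tendsto f atTop (𝓝 x) :=
    tendsto_iff_norm_sub_tendsto_zero.mpr hnorm
  refine ⟨⟨?_, ?_⟩, htendsto⟩
  · rintro _ ⟨i, rfl⟩; exact hle i
  · intro b hb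
    exact le_of_tendsto htendsto (Eventually.of_forall fun i => hb ⟨i, rfl⟩)
end

section
/- Let X be a Banach lattice, ε > 0 and 0 ≠ u ∈ X₊, and let V_{ε,u} = {x ∈ X : ‖|x| ∧ u‖ < ε}. Then either V_{ε,u} ⊆ [−u, u], or V_{ε,u} contains a non-trivial ideal of X. -/
open Filter Topology

section Aux

variable {X : Type*} [NormedAddCommGroup X] [Lattice X] [HasSolidNorm X]
    [IsOrderedAddMonoid X]

/-- Subadditivity of `⊓` for nonnegative elements. -/
private lemma my_inf_add_le {a b c : X} (ha : 0 ≤ a) (hb : 0 ≤ b) (hc : 0 ≤ c) :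
    (a + b) ⊓ c ≤ a ⊓ c + b ⊓ c := by
  have h : a ⊓ c + b ⊓ c = ((a + b) ⊓ (c + b)) ⊓ ((a + c) ⊓ (c + c)) := by
    rw [add_inf b c (a ⊓ c), inf_add a c b, inf_add a c c]
  rw [h]
  refine le_inf (le_inf inf_le_left ?_) (le_inf ?_ ?_)
  · exact le_trans inf_le_right (le_add_of_nonneg_right hb)
  · exact le_trans inf_le_right (le_add_of_nonneg_left ha)
  · exact le_trans inf_le_right (le_add_of_nonneg_right hc)

/-- Disjointness is preserved by natural scalar multiples. -/
private lemma my_nsmul_inf_eq_zero {p q : X} (hp : 0 ≤ p) (hq : 0 ≤ q) (h : p ⊓ q = 0)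
    (n : ℕ) : (n • p) ⊓ q = 0 := by
  induction n with
  | zero => simp [hq]
  | succ n ih =>
    refine le_antisymm ?_ (le_inf (nsmul_nonneg hp _) hq)
    calc ((n + 1) • p) ⊓ q = (n • p + p) ⊓ q := by rw [succ_nsmul]
      _ ≤ (n • p) ⊓ q + p ⊓ q := my_inf_add_le (nsmul_nonneg hp n) hp hq
      _ = 0 := by rw [ih, h, add_zero]

/-- Positivity reflects along `n • ·` in a lattice-ordered group. -/
private lemma my_nonneg_of_nsmul_nonneg {z : X} {n : ℕ} (hn : 0 < n) (h : 0 ≤ n • z) :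
    0 ≤ z := by
  have hdisj : z⁺ ⊓ z⁻ = 0 := posPart_inf_negPart_eq_zero z
  have h1 : (n • z⁺) ⊓ z⁻ = 0 :=
    my_nsmul_inf_eq_zero (posPart_nonneg z) (negPart_nonneg z) hdisj n
  have h2 : n • z⁻ ≤ n • z⁺ := by
    have h0 : (0:X) ≤ n • (z⁺ - z⁻) := by rw [posPart_sub_negPart]; exact h
    rw [smul_sub] at h0
    exact sub_nonneg.mp h0
  have h3 : z⁻ ≤ n • z⁻ := by
    have : (1:ℕ) • z⁻ ≤ n • z⁻ := nsmul_le_nsmul_left (negPart_nonneg z) hn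
    simpa using this
  have h4 : z⁻ ≤ (n • z⁺) ⊓ z⁻ := le_inf (h3.trans h2) le_rfl
  have h5 : z⁻ = 0 := le_antisymm (h4.trans_eq h1) (negPart_nonneg z)
  have h6 := posPart_sub_negPart z
  rw [h5, sub_zero] at h6
  rw [← h6]
  exact posPart_nonneg z

variable [NormedSpace ℝ X]

/-- Real scalar multiplication by a nonnegative scalar preserves positivity. -/
private lemma my_smul_nonneg {c : ℝ} {x : X} (hc : 0 ≤ c) (hx : 0 ≤ x) : 0 ≤ c • x := by
  -- rational case first
  have hrat : ∀ r : ℚ, 0 ≤ r → 0 ≤ (r : ℝ) • x := by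
    intro r hr
    have hd : (0:ℕ) < r.den := r.pos
    apply my_nonneg_of_nsmul_nonneg hd
    have h1 : (r.den : ℕ) • ((r:ℝ) • x) = ((r.den : ℝ) * (r : ℝ)) • x := by
      rw [← Nat.cast_smul_eq_nsmul ℝ, smul_smul]
    have h2 : (r.den : ℚ) * r = (r.num : ℚ) := by
      rw [mul_comm]; exact_mod_cast Rat.mul_den_eq_num r
    have h3 : (r.den : ℝ) * (r : ℝ) = ((r.num : ℚ) : ℝ) := by exact_mod_cast h2
    rw [h1, h3]
    have hnn : 0 ≤ r.num := Rat.num_nonneg.mpr hr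
    obtain ⟨m, hm⟩ := Int.eq_ofNat_of_zero_le hnn
    rw [hm]
    push_cast
    rw [Nat.cast_smul_eq_nsmul ℝ]
    exact nsmul_nonneg hx m
  -- closedness + density
  have hcont : Continuous fun t : ℝ => t • x := continuous_id.smul continuous_const
  have hclosed : IsClosed {t : ℝ | 0 ≤ t • x} :=
    (isClosed_Ici (a := (0:X))).preimage hcont
  obtain ⟨s, hs_mem, hs_lim⟩ :=
    mem_closure_iff_seq_limit.mp (Rat.denseRange_cast (𝕜 := ℝ) c)
  have hlim : Tendsto (fun n => |s n|) atTop (𝓝 c) := by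
    have := hs_lim.abs
    rwa [abs_of_nonneg hc] at this
  refine hclosed.mem_of_tendsto hlim ?_
  filter_upwards with n
  obtain ⟨r, hr⟩ := hs_mem n
  have habs : |s n| = ((|r| : ℚ) : ℝ) := by rw [← hr]; push_cast; ring
  show (0:X) ≤ |s n| • x
  rw [habs]
  exact hrat _ (abs_nonneg r)

private lemma my_smul_abs_le (c : ℝ) (z : X) : |c • z| ≤ |c| • |z| := by
  have key : ∀ t : ℝ, t • z ≤ |t| • |z| := by
    intro t
    rw [← sub_nonneg]
    rcases le_or_gt 0 t with ht | ht
    · rw [abs_of_nonneg ht, ← smul_sub]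
      exact my_smul_nonneg ht (sub_nonneg.mpr (le_abs_self z))
    · rw [abs_of_neg ht]
      have heq : -t • |z| - t • z = (-t) • (|z| + z) := by module
      rw [heq]
      refine my_smul_nonneg (by linarith) ?_
      have h7 : -z ≤ |z| := neg_le_abs z
      calc (0:X) = -z + z := by abel
        _ ≤ |z| + z := add_le_add_left h7 z
  refine abs_le'.mpr ⟨key c, ?_⟩
  have := key (-c)
  rwa [neg_smul, abs_neg] at this

end Aux

/-- Dichotomy: `V_{ε,u} = {x : ‖|x| ⊓ u‖ < ε}` is either contained in the order
interval `[-u, u]`, or it contains a non-trivial (nonzero solid) ideal. -/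
theorem Vset_subset_interval_or_contains_ideal
    {X : Type*} [NormedAddCommGroup X] [Lattice X] [HasSolidNorm X]
    [IsOrderedAddMonoid X] [NormedSpace ℝ X] [CompleteSpace X]
    (ε : ℝ) (hε : 0 < ε) (u : X) (hu : 0 ≤ u) (hu0 : u ≠ 0) :
    {x : X | ‖|x| ⊓ u‖ < ε} ⊆ Set.Icc (-u) u ∨
      ∃ I : Submodule ℝ X, I ≠ ⊥ ∧ (∀ x ∈ I, ∀ y : X, |y| ≤ |x| → y ∈ I) ∧
        (I : Set X) ⊆ {x : X | ‖|x| ⊓ u‖ < ε} := by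
  by_cases hV : {x : X | ‖|x| ⊓ u‖ < ε} ⊆ Set.Icc (-u) u
  · exact Or.inl hV
  right
  rw [Set.not_subset] at hV
  obtain ⟨x, hxV, hxI⟩ := hV
  set a := |x| with ha
  have ha0 : 0 ≤ a := abs_nonneg x
  have hxu : ¬ a ≤ u := by
    intro h
    exact hxI (Set.mem_Icc.mpr ⟨neg_le.mp ((neg_le_abs x).trans h), (le_abs_self x).trans h⟩)
  set y := (a - u)⁺ with hy
  have hy0 : 0 ≤ y := posPart_nonneg _
  have hyne : y ≠ 0 := by
    intro h
    exact hxu (by simpa [sub_nonpos] using posPart_eq_zero.mp h)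
  -- Key: (n • y) ⊓ u ≤ a ⊓ u
  have key : ∀ n : ℕ, (n • y) ⊓ u ≤ a ⊓ u := by
    intro n
    set d := (a - u)⁻ with hd
    have hd0 : 0 ≤ d := negPart_nonneg _
    have hdisj : y ⊓ d = 0 := posPart_inf_negPart_eq_zero (a - u)
    have h1 : (n • y) ⊓ d = 0 := my_nsmul_inf_eq_zero hy0 hd0 hdisj n
    set b := (n • y) ⊓ u with hb
    have hb0 : 0 ≤ b := le_inf (nsmul_nonneg hy0 n) hu
    have hbu : b ≤ u := inf_le_right
    have hbd : b ⊓ d = 0 := by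
      refine le_antisymm ?_ (le_inf hb0 hd0)
      calc b ⊓ d ≤ (n • y) ⊓ d := inf_le_inf_right d inf_le_left
        _ = 0 := h1
    have huad : u ≤ a + d := by
      refine sub_le_iff_le_add'.mp ?_
      have : -(a - u) ≤ (a - u)⁻ := by rw [negPart_def]; exact le_sup_left
      rwa [neg_sub] at this
    have hba : b ≤ a := by
      have h2 : b ≤ (a + d) ⊓ b := le_inf (hbu.trans huad) le_rfl
      have h3 : (a + d) ⊓ b ≤ a ⊓ b + d ⊓ b := my_inf_add_le ha0 hd0 hb0
      rw [inf_comm d b, hbd, add_zero] at h3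
      exact ((h2.trans h3).trans inf_le_left)
    exact le_inf hba hbu
  -- the ideal
  refine ⟨{ carrier := {z : X | ∃ n : ℕ, |z| ≤ n • y}
            add_mem' := ?_
            zero_mem' := ⟨0, by simp⟩
            smul_mem' := ?_ }, ?_, ?_, ?_⟩
  · rintro p q ⟨n, hn⟩ ⟨m, hm⟩
    exact ⟨n + m, (abs_add_le p q).trans (by rw [add_nsmul]; exact add_le_add hn hm)⟩
  · rintro c z ⟨n, hn⟩
    refine ⟨⌈|c|⌉₊ * n, ?_⟩
    calc |c • z| ≤ |c| • |z| := my_smul_abs_le c z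
      _ ≤ |c| • ((n : ℕ) • y) := by
          rw [← sub_nonneg, ← smul_sub]
          exact my_smul_nonneg (abs_nonneg c) (sub_nonneg.mpr hn)
      _ ≤ (⌈|c|⌉₊ : ℝ) • ((n : ℕ) • y) := by
          rw [← sub_nonneg, ← sub_smul]
          exact my_smul_nonneg (sub_nonneg.mpr (Nat.le_ceil |c|)) (nsmul_nonneg hy0 n)
      _ = (⌈|c|⌉₊ * n) • y := by
          rw [Nat.cast_smul_eq_nsmul, ← mul_nsmul']
  · intro h
    have hmem : y ∈ {z : X | ∃ n : ℕ, |z| ≤ n • y} := ⟨1, by rw [abs_of_nonneg hy0, one_smul]⟩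
    have : y ∈ (⊥ : Submodule ℝ X) := h ▸ hmem
    exact hyne (by simpa using this)
  · rintro p hp q hq
    obtain ⟨n, hn⟩ := hp
    exact ⟨n, hq.trans hn⟩
  · rintro z ⟨n, hn⟩
    have h1 : |z| ⊓ u ≤ a ⊓ u := le_trans (inf_le_inf_right u hn) (key n)
    have h2 : |(|z| ⊓ u)| ≤ |a ⊓ u| := by
      rw [abs_of_nonneg (le_inf (abs_nonneg z) hu), abs_of_nonneg (le_inf ha0 hu)]
      exact h1
    exact lt_of_le_of_lt (HasSolidNorm.solid h2) hxV
end

section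
/- If X is an order continuous Banach lattice and every un-null sequence in X is norm bounded, then X is finite-dimensional. -/
open Filter Topology

universe u

set_option linter.unusedSectionVars false

/-- Upper bounds of the range of `x`, ordered by reverse order. -/
structure MyUB {X : Type u} [NormedAddCommGroup X] [Lattice X] [HasSolidNorm X] [IsOrderedAddMonoid X] (x : ℕ → X) : Type u where
  val : X
  ub : ∀ n, x n ≤ val

instance {X : Type u} [NormedAddCommGroup X] [Lattice X] [HasSolidNorm X] [IsOrderedAddMonoid X] (x : ℕ → X) :
    SemilatticeSup (MyUB x) where
  le b c := c.val ≤ b.val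
  lt b c := c.val ≤ b.val ∧ ¬ b.val ≤ c.val
  le_refl b := le_rfl
  le_trans a b c h1 h2 := h2.trans h1
  lt_iff_le_not_ge _ _ := Iff.rfl
  le_antisymm a b h1 h2 := by
    cases a; cases b
    simp only [MyUB.mk.injEq]
    exact le_antisymm h2 h1
  sup b c := ⟨b.val ⊓ c.val, fun n => le_inf (b.ub n) (c.ub n)⟩
  le_sup_left b c := inf_le_left
  le_sup_right b c := inf_le_right
  sup_le a b c h1 h2 := le_inf h1 h2

lemma MyUB.le_iff {X : Type u} [NormedAddCommGroup X] [Lattice X] [HasSolidNorm X] [IsOrderedAddMonoid X] {x : ℕ → X}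
    (b c : MyUB x) : b ≤ c ↔ c.val ≤ b.val := Iff.rfl


section Basic
variable {X : Type*} [NormedAddCommGroup X] [Lattice X] [HasSolidNorm X] [IsOrderedAddMonoid X]

lemma myNormMono {a b : X} (ha : 0 ≤ a) (hab : a ≤ b) : ‖a‖ ≤ ‖b‖ :=
  norm_le_norm_of_abs_le_abs (by rwa [abs_of_nonneg ha, abs_of_nonneg (ha.trans hab)])

lemma myInfAddLe (a b c : X) (ha : 0 ≤ a) (hb : 0 ≤ b) (hc : 0 ≤ c) :
    (a + b) ⊓ c ≤ a ⊓ c + b ⊓ c := by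
  have h1 : a ⊓ c + b ⊓ c = ((a ⊓ c) + b) ⊓ ((a ⊓ c) + c) := add_inf _ _ _
  have h2 : (a ⊓ c) + b = (a + b) ⊓ (c + b) := inf_add _ _ _
  have h3 : (a ⊓ c) + c = (a + c) ⊓ (c + c) := inf_add _ _ _
  rw [h1, h2, h3]
  refine le_inf (le_inf inf_le_left ?_) (le_inf ?_ ?_)
  · exact inf_le_right.trans (le_add_of_nonneg_right hb)
  · exact inf_le_right.trans (le_add_of_nonneg_left ha)
  · exact inf_le_right.trans (le_add_of_nonneg_left hc)

lemma myDisjNsmul {a b : X} (ha : 0 ≤ a) (hb : 0 ≤ b) (h : a ⊓ b = 0) (n : ℕ) :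
    (n • a) ⊓ b = 0 := by
  induction n with
  | zero => simpa using hb
  | succ k ih =>
    have hk : 0 ≤ k • a := nsmul_nonneg ha k
    have : (k • a + a) ⊓ b ≤ (k • a) ⊓ b + a ⊓ b := myInfAddLe _ _ _ hk ha hb
    rw [ih, h, add_zero] at this
    have h0 : 0 ≤ (k • a + a) ⊓ b := le_inf (add_nonneg hk ha) hb
    rw [succ_nsmul]
    exact le_antisymm this h0

lemma myNonnegOfNsmul {v : X} {n : ℕ} (hn : 1 ≤ n) (h : 0 ≤ n • v) : 0 ≤ v := by
  have hd : v⁺ ⊓ v⁻ = 0 := posPart_inf_negPart_eq_zero v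
  have hsub : n • v = n • v⁺ - n • v⁻ := by
    rw [← nsmul_sub, posPart_sub_negPart]
  have h1 : n • v⁻ ≤ n • v⁺ := by
    have := h; rw [hsub, sub_nonneg] at this; exact this
  have h2 : v⁻ ≤ n • v⁻ := by
    obtain ⟨m, rfl⟩ := Nat.exists_eq_add_of_le hn
    rw [add_comm, add_nsmul, one_nsmul]
    exact le_add_of_nonneg_left (nsmul_nonneg (negPart_nonneg v) m)
  have h3 : v⁻ ≤ (n • v⁺) ⊓ v⁻ := le_inf (h2.trans h1) le_rfl
  have h4 : (n • v⁺) ⊓ v⁻ = 0 := myDisjNsmul (posPart_nonneg v) (negPart_nonneg v) hd n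
  have h5 : v⁻ = 0 := le_antisymm (h4 ▸ h3) (negPart_nonneg v)
  rwa [← negPart_eq_zero]


variable [NormedSpace ℝ X]

lemma myRatSmulNonneg {a : X} (ha : 0 ≤ a) (q : ℚ) (hq : 0 ≤ q) : 0 ≤ (q : ℝ) • a := by
  have hden : 1 ≤ q.den := q.den_pos
  apply myNonnegOfNsmul hden
  have : (q.den : ℕ) • ((q : ℝ) • a) = ((q.den : ℝ) * (q : ℝ)) • a := by
    rw [← Nat.cast_smul_eq_nsmul ℝ, smul_smul]
  rw [this]
  have h0 : ((q.den : ℚ)) * q = (q.num : ℚ) := by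
    rw [mul_comm]; exact_mod_cast Rat.mul_den_eq_num q
  have hnum : ((q.den : ℝ) * (q : ℝ)) = (q.num : ℝ) := by exact_mod_cast h0
  rw [hnum]
  have hm : (q.num : ℝ) = ((q.num.toNat : ℕ) : ℝ) := by
    exact_mod_cast (Int.toNat_of_nonneg (Rat.num_nonneg.mpr hq)).symm
  rw [hm, Nat.cast_smul_eq_nsmul]
  exact nsmul_nonneg ha _

lemma mySmulNonneg {a : X} {c : ℝ} (hc : 0 ≤ c) (ha : 0 ≤ a) : 0 ≤ c • a := by
  -- pick rationals q_k ∈ (c, c + 1/(k+1))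
  have hq : ∀ k : ℕ, ∃ q : ℚ, c < (q:ℝ) ∧ (q:ℝ) < c + 1/(k+1) := by
    intro k
    have hp : (0:ℝ) < 1/((k:ℝ)+1) := by positivity
    exact exists_rat_btwn (by linarith)
  choose q hq1 hq2 using hq
  have htend : Tendsto (fun k => ((q k : ℝ))) atTop (𝓝 c) := by
    have h1 : Tendsto (fun k : ℕ => c + 1/((k:ℝ)+1)) atTop (𝓝 c) := by
      have : Tendsto (fun n : ℕ => 1 / ((n : ℝ) + 1)) atTop (𝓝 0) :=
        tendsto_one_div_add_atTop_nhds_zero_nat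
      simpa using (tendsto_const_nhds (x := c)).add this
    exact tendsto_of_tendsto_of_tendsto_of_le_of_le tendsto_const_nhds h1
      (fun k => (hq1 k).le) (fun k => (hq2 k).le)
  have hsm : Tendsto (fun k => ((q k : ℝ)) • a) atTop (𝓝 (c • a)) :=
    htend.smul_const a
  have hmem : ∀ k, ((q k : ℝ)) • a ∈ {x : X | 0 ≤ x} := by
    intro k
    have : (0:ℝ) ≤ (q k : ℝ) := hc.trans (hq1 k).le
    have hq0 : 0 ≤ q k := by exact_mod_cast this
    exact myRatSmulNonneg ha _ hq0
  exact isClosed_nonneg.mem_of_tendsto hsm (Filter.Eventually.of_forall hmem)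

lemma mySmulMono {a b : X} {c : ℝ} (hc : 0 ≤ c) (hab : a ≤ b) : c • a ≤ c • b := by
  have := mySmulNonneg hc (sub_nonneg.mpr hab)
  rwa [smul_sub, sub_nonneg] at this

lemma mySmulMonoScalar {a : X} {c d : ℝ} (hcd : c ≤ d) (ha : 0 ≤ a) : c • a ≤ d • a := by
  have := mySmulNonneg (sub_nonneg.mpr hcd) ha
  rwa [sub_smul, sub_nonneg] at this

lemma myArch {a b : X} (ha : 0 ≤ a) (h : ∀ n : ℕ, n • a ≤ b) : a = 0 := by
  by_contra hne
  have hpos : 0 < ‖a‖ := norm_pos_iff.mpr hne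
  obtain ⟨n, hn⟩ := exists_nat_gt (‖b‖ / ‖a‖)
  have h1 : ‖(n : ℕ) • a‖ ≤ ‖b‖ := myNormMono (nsmul_nonneg ha n) (h n)
  rw [← Nat.cast_smul_eq_nsmul ℝ, norm_smul, Real.norm_natCast] at h1
  have := (div_lt_iff₀ hpos).mp hn
  linarith

lemma myArchEps {a b : X} (ha : 0 ≤ a) (h : ∀ ε : ℝ, 0 < ε → ε ≤ 1 → a ≤ ε • b) : a = 0 := by
  have hb : 0 ≤ b := by
    have h1 := h 1 one_pos le_rfl
    rw [one_smul] at h1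
    exact ha.trans h1
  by_contra hne
  have hpos : 0 < ‖a‖ := norm_pos_iff.mpr hne
  have hkey : ∀ ε : ℝ, 0 < ε → ε ≤ 1 → ‖a‖ ≤ ε * ‖b‖ := by
    intro ε hε hε1
    have h1 : ‖a‖ ≤ ‖ε • b‖ := myNormMono ha (h ε hε hε1)
    rwa [norm_smul, Real.norm_of_nonneg hε.le] at h1
  have hb0 : 0 < ‖b‖ := lt_of_lt_of_le hpos (by simpa using hkey 1 one_pos le_rfl)
  obtain ⟨ε, hε, hlt⟩ : ∃ ε : ℝ, 0 < ε ∧ ε * ‖b‖ < ‖a‖ := by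
    refine ⟨‖a‖ / (2 * ‖b‖), by positivity, ?_⟩
    rw [div_mul_eq_mul_div, mul_comm (2:ℝ) ‖b‖, ← div_div, mul_div_assoc]
    rw [div_self hb0.ne', mul_one]
    linarith
  have := hkey (min ε 1) (lt_min hε one_pos) (min_le_right _ _)
  have h2 : min ε 1 * ‖b‖ ≤ ε * ‖b‖ := by
    apply mul_le_mul_of_nonneg_right (min_le_left _ _) hb0.le
  linarith


end Basic

section Main
variable {X : Type u} [NormedAddCommGroup X] [Lattice X] [HasSolidNorm X] [IsOrderedAddMonoid X] [NormedSpace ℝ X] [CompleteSpace X]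

lemma myMonotoneConv
    (hoc : ∀ (ι : Type u) [SemilatticeSup ι] [Nonempty ι] (f : ι → X),
      Antitone f → IsGLB (Set.range f) 0 → Tendsto (fun i => ‖f i‖) atTop (𝓝 0))
    (x : ℕ → X) (hm : Monotone x) (u : X) (hu : ∀ n, x n ≤ u) :
    ∃ y : X, Tendsto x atTop (𝓝 y) := by
  classical
  set B := MyUB x with hB
  haveI : Nonempty B := ⟨⟨u, hu⟩⟩
  set f : ℕ × B → X := fun i => i.2.val - x i.1 with hf
  have hanti : Antitone f := by
    rintro ⟨n, b⟩ ⟨m, c⟩ ⟨h1, h2⟩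
    exact sub_le_sub ((MyUB.le_iff _ _).mp h2) (hm h1)
  have hglb : IsGLB (Set.range f) 0 := by
    constructor
    · rintro z ⟨⟨n, b⟩, rfl⟩
      exact sub_nonneg.mpr (b.ub n)
    · intro v hv
      have hvf : ∀ (n : ℕ) (b : B), v ≤ b.val - x n := by
        intro n b; exact hv ⟨(n, b), rfl⟩
      -- b - k • v⁺ is an upper bound for all k
      have key : ∀ (k : ℕ) (b : B), ∀ n, x n ≤ b.val - k • v⁺ := by
        intro k
        induction k with
        | zero => intro b n; simpa using b.ub n
        | succ j ih =>
          intro b n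
          set b' : B := ⟨b.val - j • v⁺, ih b⟩ with hb'
          have h1 : x n ≤ b'.val - v := le_sub_comm.mp (hvf n b')
          have h2 : x n ≤ b'.val := b'.ub n
          have h3 : x n ≤ (b'.val - v) ⊓ b'.val := le_inf h1 h2
          have h4 : (b'.val - v) ⊓ b'.val = b'.val - v⁺ := by
            have : (b'.val - v) ⊓ (b'.val - 0) = b'.val - (v ⊔ 0) := by
              rw [sub_eq_add_neg, sub_eq_add_neg, sub_eq_add_neg, ← add_inf, neg_sup]
            simpa [posPart_def] using this
          rw [h4] at h3
          calc x n ≤ b'.val - v⁺ := h3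
            _ = b.val - (j + 1) • v⁺ := by rw [hb', succ_nsmul]; exact (sub_add_eq_sub_sub _ _ _).symm
      have hvp : v⁺ = 0 := by
        refine myArch (b := u - x 0) (posPart_nonneg v) (fun k => ?_)
        have h5 : x 0 ≤ u - k • v⁺ := key k ⟨u, hu⟩ 0
        exact le_sub_comm.mp h5
      exact posPart_eq_zero.mp hvp
  have htend := hoc (ℕ × B) f hanti hglb
  have hcauchy : CauchySeq x := by
    rw [Metric.cauchySeq_iff']
    intro ε hε
    have hev : ∀ᶠ i in (atTop : Filter (ℕ × B)), ‖f i‖ < ε / 2 := by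
      have := Metric.tendsto_nhds.mp htend (ε / 2) (by linarith)
      simpa [Real.dist_eq, abs_of_nonneg (norm_nonneg _)] using this
    obtain ⟨i₀, hi₀⟩ := Filter.eventually_atTop.mp hev
    obtain ⟨N₀, b₀⟩ := i₀
    refine ⟨N₀, fun n hn => ?_⟩
    have hA : ‖f (n, b₀)‖ < ε / 2 := hi₀ (n, b₀) ⟨hn, le_rfl⟩
    have hB2 : ‖f (N₀, b₀)‖ < ε / 2 := hi₀ (N₀, b₀) ⟨le_rfl, le_rfl⟩
    have : x n - x N₀ = (b₀.val - x N₀) - (b₀.val - x n) := by abel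
    calc dist (x n) (x N₀) = ‖x n - x N₀‖ := by rw [dist_eq_norm]
      _ = ‖(b₀.val - x N₀) - (b₀.val - x n)‖ := by rw [this]
      _ ≤ ‖b₀.val - x N₀‖ + ‖b₀.val - x n‖ := norm_sub_le _ _
      _ < ε / 2 + ε / 2 := add_lt_add hB2 hA
      _ = ε := by ring
  exact cauchySeq_tendsto_of_complete hcauchy


lemma mySumInfZero {α : Type*} (c : X) (hc : 0 ≤ c) (y : α → X) (s : Finset α)
    (h0 : ∀ k ∈ s, 0 ≤ y k) (hd : ∀ k ∈ s, y k ⊓ c = 0) :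
    (∑ k ∈ s, y k) ⊓ c = 0 := by
  classical
  induction s using Finset.induction_on with
  | empty => simpa using hc
  | @insert a t hnotmem ih =>
    rw [Finset.sum_insert hnotmem]
    have ht0 : 0 ≤ ∑ k ∈ t, y k :=
      Finset.sum_nonneg fun k hk => h0 k (Finset.mem_insert_of_mem hk)
    have ha0 : 0 ≤ y a := h0 a (Finset.mem_insert_self a t)
    have h1 : (y a + ∑ k ∈ t, y k) ⊓ c ≤ y a ⊓ c + (∑ k ∈ t, y k) ⊓ c :=
      myInfAddLe _ _ _ ha0 ht0 hc
    rw [hd a (Finset.mem_insert_self a t),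
      ih (fun k hk => h0 k (Finset.mem_insert_of_mem hk))
         (fun k hk => hd k (Finset.mem_insert_of_mem hk)),
      add_zero] at h1
    exact le_antisymm h1 (le_inf (add_nonneg ha0 ht0) hc)

lemma myDisjNormNull
    (hoc : ∀ (ι : Type u) [SemilatticeSup ι] [Nonempty ι] (f : ι → X),
      Antitone f → IsGLB (Set.range f) 0 → Tendsto (fun i => ‖f i‖) atTop (𝓝 0))
    (u : X) (hu0 : 0 ≤ u) (y : ℕ → X) (h0 : ∀ n, 0 ≤ y n) (hle : ∀ n, y n ≤ u)
    (hd : ∀ m n, m ≠ n → y m ⊓ y n = 0) :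
    Tendsto y atTop (𝓝 0) := by
  classical
  set S : ℕ → X := fun n => ∑ k ∈ Finset.range n, y k with hS
  have hmono : Monotone S := by
    apply monotone_nat_of_le_succ
    intro n
    rw [hS]
    simp only [Finset.sum_range_succ]
    exact le_add_of_nonneg_right (h0 n)
  have hSu : ∀ n, S n ≤ u := by
    intro n
    induction n with
    | zero => simpa [hS] using hu0
    | succ m ih =>
      have hdisj : S m ⊓ y m = 0 :=
        mySumInfZero (y m) (h0 m) y (Finset.range m) (fun k _ => h0 k)
          (fun k hk => hd k m (Nat.ne_of_lt (Finset.mem_range.mp hk)))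
      have hsum : S m + y m = S m ⊔ y m := by
        have h := inf_add_sup (S m) (y m)
        rw [hdisj, zero_add] at h
        exact h.symm
      have hstep : S (m + 1) = S m + y m := by
        rw [hS]; simp [Finset.sum_range_succ]
      rw [hstep, hsum]
      exact sup_le ih (hle m)
  obtain ⟨L, hL⟩ := myMonotoneConv hoc S hmono u hSu
  have hL1 : Tendsto (fun n => S (n + 1)) atTop (𝓝 L) :=
    hL.comp (tendsto_add_atTop_nat 1)
  have hy : ∀ n, y n = S (n + 1) - S n := by
    intro n; rw [hS]; simp [Finset.sum_range_succ]
  have := hL1.sub hL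
  rw [sub_self] at this
  exact this.congr (fun n => (hy n).symm)

lemma mySmulDisj {a b : X} (ha : 0 ≤ a) (hb : 0 ≤ b) (h : a ⊓ b = 0) {c : ℝ} (hc : 0 ≤ c) :
    (c • a) ⊓ b = 0 := by
  obtain ⟨N, hN⟩ := exists_nat_gt c
  have h1 : c • a ≤ (N : ℕ) • a := by
    rw [← Nat.cast_smul_eq_nsmul ℝ]
    exact mySmulMonoScalar hN.le ha
  have h2 : (c • a) ⊓ b ≤ ((N : ℕ) • a) ⊓ b := inf_le_inf_right b h1
  rw [myDisjNsmul ha hb h N] at h2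
  exact le_antisymm h2 (le_inf (mySmulNonneg hc ha) hb)

lemma myNoUnbDisjSeq
    (hoc : ∀ (ι : Type u) [SemilatticeSup ι] [Nonempty ι] (f : ι → X),
      Antitone f → IsGLB (Set.range f) 0 → Tendsto (fun i => ‖f i‖) atTop (𝓝 0))
    (hb : ∀ x : ℕ → X, UnTendsto x atTop 0 → ∃ C : ℝ, ∀ n, ‖x n‖ ≤ C)
    (d : ℕ → X) (h0 : ∀ n, 0 ≤ d n) (hd : ∀ m n, m ≠ n → d m ⊓ d n = 0)
    (hnz : ∀ n, d n ≠ 0) : False := by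
  classical
  set c : ℕ → ℝ := fun n => ((n : ℝ) + 1) / ‖d n‖ with hc
  have hdn : ∀ n, 0 < ‖d n‖ := fun n => norm_pos_iff.mpr (hnz n)
  have hcpos : ∀ n, 0 < c n := fun n => div_pos (by positivity) (hdn n)
  set x : ℕ → X := fun n => c n • d n with hx
  have hx0 : ∀ n, 0 ≤ x n := fun n => mySmulNonneg (hcpos n).le (h0 n)
  have hxd : ∀ m n, m ≠ n → x m ⊓ x n = 0 := by
    intro m n hmn
    have h1 : (c m • d m) ⊓ d n = 0 := mySmulDisj (h0 m) (h0 n) (hd m n hmn) (hcpos m).le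
    have h2 : (c n • d n) ⊓ (c m • d m) = 0 := by
      rw [inf_comm] at h1
      exact mySmulDisj (h0 n) (mySmulNonneg (hcpos m).le (h0 m)) h1 (hcpos n).le
    rw [hx]
    simpa [inf_comm] using h2
  have hun : UnTendsto x atTop 0 := by
    intro v hv
    have habs : ∀ n, |x n - 0| = x n := fun n => by rw [sub_zero, abs_of_nonneg (hx0 n)]
    set y : ℕ → X := fun n => x n ⊓ v with hy
    have hy0 : ∀ n, 0 ≤ y n := fun n => le_inf (hx0 n) hv
    have hyv : ∀ n, y n ≤ v := fun n => inf_le_right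
    have hyd : ∀ m n, m ≠ n → y m ⊓ y n = 0 := by
      intro m n hmn
      have : y m ⊓ y n ≤ x m ⊓ x n :=
        inf_le_inf inf_le_left inf_le_left
      rw [hxd m n hmn] at this
      exact le_antisymm this (le_inf (hy0 m) (hy0 n))
    have htend : Tendsto y atTop (𝓝 0) := myDisjNormNull hoc v hv y hy0 hyv hyd
    have : Tendsto (fun n => ‖y n‖) atTop (𝓝 ‖(0 : X)‖) := htend.norm
    rw [norm_zero] at this
    exact this.congr (fun n => by rw [hy, habs n])
  obtain ⟨C, hC⟩ := hb x hun
  obtain ⟨n, hn⟩ := exists_nat_gt C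
  have hxn : ‖x n‖ = (n : ℝ) + 1 := by
    have h1 : ‖x n‖ = c n * ‖d n‖ := by
      rw [hx]; simp [norm_smul, Real.norm_of_nonneg (hcpos n).le]
    rw [h1, hc]
    exact div_mul_cancel₀ _ (hdn n).ne'
  have h2 := hC n
  rw [hxn] at h2
  linarith


/-- An "atom": a nonzero positive element admitting no nontrivial disjoint splitting below it. -/
def MyAtom {X : Type u} [NormedAddCommGroup X] [Lattice X] [HasSolidNorm X] [IsOrderedAddMonoid X] (a : X) : Prop :=
  0 ≤ a ∧ a ≠ 0 ∧ ∀ v w : X, 0 ≤ v → 0 ≤ w → v ≤ a → w ≤ a → v ⊓ w = 0 → v = 0 ∨ w = 0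

lemma myAtomBelow
    (hoc : ∀ (ι : Type u) [SemilatticeSup ι] [Nonempty ι] (f : ι → X),
      Antitone f → IsGLB (Set.range f) 0 → Tendsto (fun i => ‖f i‖) atTop (𝓝 0))
    (hb : ∀ x : ℕ → X, UnTendsto x atTop 0 → ∃ C : ℝ, ∀ n, ‖x n‖ ≤ C)
    (x : X) (hx0 : 0 ≤ x) (hxne : x ≠ 0) : ∃ a : X, MyAtom a ∧ a ≤ x := by
  classical
  by_contra hno
  push_neg at hno
  set T := {b : X // 0 ≤ b ∧ b ≤ x ∧ b ≠ 0} with hT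
  have hsplit : ∀ b : T,
      ∃ p : T × T,
        p.1.1 ≤ b.1 ∧ p.2.1 ≤ b.1 ∧ p.1.1 ⊓ p.2.1 = 0 := by
    rintro ⟨b, hb0, hbx, hbne⟩
    have hnotatom : ¬ MyAtom b := fun h => hno b h hbx
    rw [MyAtom] at hnotatom
    push_neg at hnotatom
    obtain ⟨v, w, hv0, hw0, hvb, hwb, hvw, hvne, hwne⟩ := hnotatom hb0 hbne
    exact ⟨(⟨v, hv0, hvb.trans hbx, hvne⟩, ⟨w, hw0, hwb.trans hbx, hwne⟩), hvb, hwb, hvw⟩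
  choose g hg1 hg2 hg3 using hsplit
  set seq : ℕ → T := fun n => Nat.rec (⟨x, hx0, le_rfl, hxne⟩ : T) (fun _ p => (g p).2) n
    with hseq
  have hseqsucc : ∀ n, seq (n + 1) = (g (seq n)).2 := fun n => rfl
  set d : ℕ → X := fun n => ((g (seq n)).1).1 with hdd
  have hchain : ∀ n, (seq (n + 1)).1 ≤ (seq n).1 := fun n => by
    rw [hseqsucc]; exact hg2 (seq n)
  have hmono : ∀ m n, m ≤ n → (seq n).1 ≤ (seq m).1 := by
    intro m n hmn
    induction n with
    | zero => rw [Nat.le_zero.mp hmn]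
    | succ k ih =>
      rcases Nat.lt_or_ge m (k+1) with h | h
      · exact (hchain k).trans (ih (Nat.lt_succ_iff.mp h))
      · rw [Nat.le_antisymm hmn h]
  have hdisj0 : ∀ m n, m < n → d m ⊓ d n = 0 := by
    intro m n hmn
    have h1 : d n ≤ (seq (m + 1)).1 := by
      have : d n ≤ (seq n).1 := hg1 (seq n)
      exact this.trans (hmono (m+1) n hmn)
    rw [hseqsucc] at h1
    have h2 : d m ⊓ d n ≤ ((g (seq m)).1).1 ⊓ ((g (seq m)).2).1 :=
      inf_le_inf le_rfl h1
    rw [hg3 (seq m)] at h2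
    exact le_antisymm h2 (le_inf ((g (seq m)).1).2.1 ((g (seq n)).1).2.1)
  refine myNoUnbDisjSeq hoc hb d (fun n => ((g (seq n)).1).2.1) ?_
    (fun n => ((g (seq n)).1).2.2.2)
  intro m n hmn
  rcases lt_or_gt_of_ne hmn with h | h
  · exact hdisj0 m n h
  · rw [inf_comm]; exact hdisj0 n m h

lemma myAtomInterval {a : X} (ha : MyAtom a) {y : X} (hy0 : 0 ≤ y) (hya : y ≤ a) :
    ∃ s : ℝ, 0 ≤ s ∧ y = s • a := by
  obtain ⟨ha0, hane, hatom⟩ := ha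
  have hanorm : 0 < ‖a‖ := norm_pos_iff.mpr hane
  set Sset : Set ℝ := {s : ℝ | 0 ≤ s ∧ s • a ≤ y} with hSset
  have hne : Sset.Nonempty := ⟨0, le_rfl, by rw [zero_smul]; exact hy0⟩
  have hbdd : BddAbove Sset := by
    refine ⟨‖y‖ / ‖a‖, fun s hs => ?_⟩
    obtain ⟨hs0, hsy⟩ := hs
    have h1 : ‖s • a‖ ≤ ‖y‖ := myNormMono (mySmulNonneg hs0 ha0) hsy
    rw [norm_smul, Real.norm_of_nonneg hs0] at h1
    rw [le_div_iff₀ hanorm]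
    exact h1
  have hclosed : IsClosed Sset := by
    have h1 : Sset = Set.Ici (0:ℝ) ∩ (fun s : ℝ => y - s • a) ⁻¹' {z : X | 0 ≤ z} := by
      ext s
      simp only [hSset, Set.mem_setOf_eq, Set.mem_inter_iff, Set.mem_Ici, Set.mem_preimage,
        sub_nonneg]
    rw [h1]
    exact isClosed_Ici.inter (isClosed_nonneg.preimage
      (continuous_const.sub (continuous_id.smul continuous_const)))
  set t := sSup Sset with ht
  have htmem : t ∈ Sset := hclosed.csSup_mem hne hbdd
  obtain ⟨ht0, hty⟩ := htmem
  set z := y - t • a with hz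
  have hz0 : 0 ≤ z := sub_nonneg.mpr hty
  have hza : z ≤ a := by
    have : z ≤ y := sub_le_self y (mySmulNonneg ht0 ha0)
    exact this.trans hya
  have hzeps : ∀ ε : ℝ, 0 < ε → ε ≤ 1 → z ≤ ε • a := by
    intro ε hε hε1
    set p := z - ε • a with hp
    have hdisj : p⁺ ⊓ p⁻ = 0 := posPart_inf_negPart_eq_zero p
    have hppos : 0 ≤ p⁺ := posPart_nonneg p
    have hpneg : 0 ≤ p⁻ := negPart_nonneg p
    have hple : p⁺ ≤ a := by
      rw [posPart_def]
      have h1 : p ⊔ 0 ≤ z ⊔ 0 :=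
        sup_le_sup_right (sub_le_self z (mySmulNonneg hε.le ha0)) 0
      rw [sup_of_le_left hz0] at h1
      exact h1.trans hza
    have hnle : p⁻ ≤ a := by
      rw [negPart_def]
      have h1 : -p ⊔ 0 ≤ (ε • a) ⊔ 0 := by
        apply sup_le_sup_right
        rw [hp, neg_sub]
        exact sub_le_self _ hz0
      rw [sup_of_le_left (mySmulNonneg hε.le ha0)] at h1
      have h2 : ε • a ≤ (1:ℝ) • a := mySmulMonoScalar hε1 ha0
      rw [one_smul] at h2
      exact h1.trans h2
    rcases hatom p⁺ p⁻ hppos hpneg hple hnle hdisj with h | h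
    · rw [posPart_eq_zero] at h
      rwa [hp, sub_nonpos] at h
    · exfalso
      rw [negPart_eq_zero] at h
      rw [hp, sub_nonneg] at h
      have hmem : t + ε ∈ Sset := by
        constructor
        · linarith
        · rw [add_smul]
          calc t • a + ε • a ≤ t • a + z := add_le_add_right h _
            _ = y := by rw [hz]; abel
      have := le_csSup hbdd hmem
      linarith
  have hzz : z = 0 := myArchEps hz0 hzeps
  refine ⟨t, ht0, ?_⟩
  rw [hz, sub_eq_zero] at hzz
  exact hzz


lemma myTopCoef (x a : X) (hx0 : 0 ≤ x) (ha0 : 0 ≤ a) (hane : a ≠ 0) :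
    ∃ t : ℝ, 0 ≤ t ∧ t • a ≤ x ∧ ∀ s : ℝ, 0 ≤ s → s • a ≤ x → s ≤ t := by
  have hanorm : 0 < ‖a‖ := norm_pos_iff.mpr hane
  set Sset : Set ℝ := {s : ℝ | 0 ≤ s ∧ s • a ≤ x} with hSset
  have hne : Sset.Nonempty := ⟨0, le_rfl, by rw [zero_smul]; exact hx0⟩
  have hbdd : BddAbove Sset := by
    refine ⟨‖x‖ / ‖a‖, fun s hs => ?_⟩
    obtain ⟨hs0, hsy⟩ := hs
    have h1 : ‖s • a‖ ≤ ‖x‖ := myNormMono (mySmulNonneg hs0 ha0) hsy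
    rw [norm_smul, Real.norm_of_nonneg hs0] at h1
    rw [le_div_iff₀ hanorm]
    exact h1
  have hclosed : IsClosed Sset := by
    have h1 : Sset = Set.Ici (0:ℝ) ∩ (fun s : ℝ => x - s • a) ⁻¹' {z : X | 0 ≤ z} := by
      ext s
      simp only [hSset, Set.mem_setOf_eq, Set.mem_inter_iff, Set.mem_Ici, Set.mem_preimage,
        sub_nonneg]
    rw [h1]
    exact isClosed_Ici.inter (isClosed_nonneg.preimage
      (continuous_const.sub (continuous_id.smul continuous_const)))
  have htmem : sSup Sset ∈ Sset := hclosed.csSup_mem hne hbdd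
  exact ⟨sSup Sset, htmem.1, htmem.2, fun s hs0 hsx => le_csSup hbdd ⟨hs0, hsx⟩⟩

lemma mySumLeOfDisj (x : X) (hx0 : 0 ≤ x) (g : X → X) (F : Finset X)
    (h0 : ∀ a ∈ F, 0 ≤ g a) (hle : ∀ a ∈ F, g a ≤ x)
    (hdisj : ∀ a ∈ F, ∀ b ∈ F, a ≠ b → g a ⊓ g b = 0) :
    ∑ a ∈ F, g a ≤ x := by
  classical
  induction F using Finset.induction_on with
  | empty => simpa using hx0
  | @insert a t hnotmem ih =>
    rw [Finset.sum_insert hnotmem]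
    have hin : ∀ b ∈ t, b ∈ insert a t := fun b hb => Finset.mem_insert_of_mem hb
    have hsum_le : ∑ b ∈ t, g b ≤ x :=
      ih (fun b hb => h0 b (hin b hb)) (fun b hb => hle b (hin b hb))
        (fun b hb c hc => hdisj b (hin b hb) c (hin c hc))
    have hd0 : (∑ b ∈ t, g b) ⊓ g a = 0 :=
      mySumInfZero (g a) (h0 a (Finset.mem_insert_self a t)) g t
        (fun b hb => h0 b (hin b hb))
        (fun b hb => hdisj b (hin b hb) a (Finset.mem_insert_self a t)
          (fun h => hnotmem (h ▸ hb)))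
    have hsup : (∑ b ∈ t, g b) + g a = (∑ b ∈ t, g b) ⊔ g a := by
      have h := inf_add_sup (∑ b ∈ t, g b) (g a)
      rw [hd0, zero_add] at h
      exact h.symm
    rw [add_comm (g a), hsup]
    exact sup_le hsum_le (hle a (Finset.mem_insert_self a t))

lemma mySpanPos
    (hoc : ∀ (ι : Type u) [SemilatticeSup ι] [Nonempty ι] (f : ι → X),
      Antitone f → IsGLB (Set.range f) 0 → Tendsto (fun i => ‖f i‖) atTop (𝓝 0))
    (hb : ∀ x : ℕ → X, UnTendsto x atTop 0 → ∃ C : ℝ, ∀ n, ‖x n‖ ≤ C)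
    (M : Set X) (hMatom : ∀ a ∈ M, MyAtom a)
    (hMdisj : M.Pairwise (fun a b => a ⊓ b = 0))
    (hMmax : ∀ A ∈ {A : Set X | (∀ a ∈ A, MyAtom a) ∧
      A.Pairwise (fun a b => a ⊓ b = 0)}, M ⊆ A → A = M)
    (hMfin : M.Finite)
    (x : X) (hx0 : 0 ≤ x) : x ∈ Submodule.span ℝ M := by
  classical
  set F := hMfin.toFinset with hF
  have hFM : ∀ a, a ∈ F ↔ a ∈ M := fun a => Set.Finite.mem_toFinset hMfin
  have hTC : ∀ a ∈ M, ∃ t : ℝ, 0 ≤ t ∧ t • a ≤ x ∧ ∀ s : ℝ, 0 ≤ s → s • a ≤ x → s ≤ t :=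
    fun a haM => myTopCoef x a hx0 (hMatom a haM).1 (hMatom a haM).2.1
  choose! tf htf0 htfle htfmax using hTC
  set g : X → X := fun a => tf a • a with hg
  have hg0 : ∀ a ∈ F, 0 ≤ g a := fun a ha =>
    mySmulNonneg (htf0 a ((hFM a).mp ha)) (hMatom a ((hFM a).mp ha)).1
  have hgle : ∀ a ∈ F, g a ≤ x := fun a ha => htfle a ((hFM a).mp ha)
  have hgdisj : ∀ a ∈ F, ∀ b ∈ F, a ≠ b → g a ⊓ g b = 0 := by
    intro a ha b hb hab
    have ha' := (hFM a).mp ha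
    have hb' := (hFM b).mp hb
    have hab0 : a ⊓ b = 0 := hMdisj ha' hb' hab
    have h1 : (tf a • a) ⊓ b = 0 :=
      mySmulDisj (hMatom a ha').1 (hMatom b hb').1 hab0 (htf0 a ha')
    have h2 : (tf b • b) ⊓ (tf a • a) = 0 := by
      rw [inf_comm] at h1
      exact mySmulDisj (hMatom b hb').1 (mySmulNonneg (htf0 a ha') (hMatom a ha').1)
        h1 (htf0 b hb')
    rw [hg]
    simpa [inf_comm] using h2
  have hSx : ∑ a ∈ F, g a ≤ x := mySumLeOfDisj x hx0 g F hg0 hgle hgdisj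
  set r := x - ∑ a ∈ F, g a with hr
  have hr0 : 0 ≤ r := sub_nonneg.mpr hSx
  have hra : ∀ a ∈ M, r ⊓ a = 0 := by
    intro a haM
    set c := r ⊓ a with hcdef
    have hc0 : 0 ≤ c := le_inf hr0 (hMatom a haM).1
    have hca : c ≤ a := inf_le_right
    obtain ⟨s, hs0, hcs⟩ := myAtomInterval (hMatom a haM) hc0 hca
    rcases eq_or_lt_of_le hs0 with h | h
    · show c = 0
      rw [hcs, ← h, zero_smul]
    · exfalso
      have hcr : c ≤ r := inf_le_left
      have hgaS : g a ≤ ∑ b ∈ F, g b := by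
        apply Finset.single_le_sum hg0 ((hFM a).mpr haM)
      have hkey : (tf a + s) • a ≤ x := by
        rw [add_smul]
        calc tf a • a + s • a = g a + c := by rw [hg, hcs]
          _ ≤ (∑ b ∈ F, g b) + r := add_le_add hgaS hcr
          _ = x := by rw [hr]; abel
      have := htfmax a haM (tf a + s) (by linarith [htf0 a haM]) hkey
      linarith
  by_cases hrz : r = 0
  · have hx : x = ∑ a ∈ F, g a := by rw [← sub_eq_zero, ← hr, hrz]
    rw [hx]
    apply Submodule.sum_mem
    intro a ha
    exact Submodule.smul_mem _ _ (Submodule.subset_span ((hFM a).mp ha))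
  · exfalso
    obtain ⟨b, hbatom, hbr⟩ := myAtomBelow hoc hb r hr0 hrz
    have hbM : ∀ a ∈ M, b ⊓ a = 0 := by
      intro a haM
      have h1 : b ⊓ a ≤ r ⊓ a := inf_le_inf_right a hbr
      rw [hra a haM] at h1
      exact le_antisymm h1 (le_inf hbatom.1 (hMatom a haM).1)
    have hbnotM : b ∉ M := by
      intro hbM'
      have := hbM b hbM'
      rw [inf_idem] at this
      exact hbatom.2.1 this
    have hins : insert b M ∈ {A : Set X | (∀ a ∈ A, MyAtom a) ∧
        A.Pairwise (fun a b => a ⊓ b = 0)} := by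
      constructor
      · intro a ha
        rcases Set.mem_insert_iff.mp ha with h | h
        · rw [h]; exact hbatom
        · exact hMatom a h
      · apply Set.Pairwise.insert hMdisj
        intro a haM _
        have h1 : b ⊓ a = 0 := hbM a haM
        have h2 : a ⊓ b = 0 := by rw [inf_comm]; exact h1
        exact ⟨h1, h2⟩
    have := hMmax _ hins (Set.subset_insert b M)
    rw [← this] at hbnotM
    exact hbnotM (Set.mem_insert b M)

end Main

/-- If `X` is an order continuous Banach lattice in which every un-null sequence
is norm bounded, then `X` is finite-dimensional. -/
theorem finiteDimensional_of_unNull_bounded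
    {X : Type u} [NormedAddCommGroup X] [Lattice X] [HasSolidNorm X] [IsOrderedAddMonoid X] [NormedSpace ℝ X] [CompleteSpace X]
    (hoc : ∀ (ι : Type u) [SemilatticeSup ι] [Nonempty ι] (f : ι → X),
      Antitone f → IsGLB (Set.range f) 0 → Tendsto (fun i => ‖f i‖) atTop (𝓝 0))
    (hb : ∀ x : ℕ → X, UnTendsto x atTop 0 → ∃ C : ℝ, ∀ n, ‖x n‖ ≤ C) :
    FiniteDimensional ℝ X := by
  classical
  -- a maximal pairwise-disjoint family of atoms
  have hzorn : ∃ M, Maximal (· ∈ {A : Set X | (∀ a ∈ A, MyAtom a) ∧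
      A.Pairwise (fun a b => a ⊓ b = 0)}) M := by
    apply zorn_subset
    intro c hc hchain
    refine ⟨⋃₀ c, ⟨?_, ?_⟩, fun A hA => Set.subset_sUnion_of_mem hA⟩
    · rintro a ⟨A, hA, haA⟩
      exact (hc hA).1 a haA
    · rintro a ⟨A, hA, haA⟩ b ⟨B, hB, hbB⟩ hab
      rcases hchain.total hA hB with h | h
      · exact (hc hB).2 (h haA) hbB hab
      · exact (hc hA).2 haA (h hbB) hab
  obtain ⟨M, hMm⟩ := hzorn
  obtain ⟨hMatom, hMdisj⟩ := hMm.prop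
  have hMmax : ∀ A ∈ {A : Set X | (∀ a ∈ A, MyAtom a) ∧
      A.Pairwise (fun a b => a ⊓ b = 0)}, M ⊆ A → A = M :=
    fun A hA hMA => subset_antisymm (hMm.2 hA hMA) hMA
  have hMfin : M.Finite := by
    by_contra hinf
    have hinf' : M.Infinite := hinf
    set e := hinf'.natEmbedding with he
    refine myNoUnbDisjSeq hoc hb (fun n => (e n).1)
      (fun n => (hMatom _ (e n).2).1) ?_ (fun n => (hMatom _ (e n).2).2.1)
    intro m n hmn
    have hne : ((e m) : X) ≠ ((e n) : X) := by
      intro h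
      exact hmn (e.injective (Subtype.ext h))
    exact hMdisj (e m).2 (e n).2 hne
  have hspan : ∀ x : X, x ∈ Submodule.span ℝ M := by
    intro x
    have h1 := mySpanPos hoc hb M hMatom hMdisj hMmax hMfin x⁺ (posPart_nonneg x)
    have h2 := mySpanPos hoc hb M hMatom hMdisj hMmax hMfin x⁻ (negPart_nonneg x)
    have h3 := sub_mem h1 h2
    rwa [posPart_sub_negPart] at h3
  have htop : Submodule.span ℝ M = ⊤ := Submodule.eq_top_iff'.mpr hspan
  refine ⟨⟨hMfin.toFinset, ?_⟩⟩
  rw [Set.Finite.coe_toFinset]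
  exact htop
end

section
/- Let Y be a norm-dense sublattice of a normed lattice X and (y_α) a net in Y. If y_α un-converges to 0 in Y (i.e., ‖|y_α| ∧ v‖ → 0 for all v ∈ Y₊), then y_α un-converges to 0 in X. -/
open Filter Topology

/-- If `Y` is a norm-dense sublattice of a normed lattice `X` and a net in `Y`
un-converges to `0` in `Y` (tested against positive elements of `Y`), then it
un-converges to `0` in `X`. -/
theorem unTendsto_of_unTendsto_in_dense_sublattice
    {ι X : Type*} [NormedAddCommGroup X] [Lattice X] [HasSolidNorm X]
    [IsOrderedAddMonoid X] [NormedSpace ℝ X]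
    (Y : Submodule ℝ X) (hlat : ∀ y ∈ Y, |y| ∈ Y)
    (hdense : closure (Y : Set X) = Set.univ)
    (l : Filter ι) (y : ι → X) (hy : ∀ i, y i ∈ Y)
    (h : ∀ v ∈ Y, 0 ≤ v → Tendsto (fun i => ‖|y i| ⊓ v‖) l (𝓝 0)) :
    UnTendsto y l 0 := by
  intro u hu
  rw [Metric.tendsto_nhds]
  intro ε hε
  have hu' : u ∈ closure (Y : Set X) := by rw [hdense]; trivial
  obtain ⟨v, hvY, hv⟩ := Metric.mem_closure_iff.1 hu' (ε / 2) (by linarith)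
  have hwY : |v| ∈ Y := hlat v hvY
  have hw := h |v| hwY (abs_nonneg v)
  rw [Metric.tendsto_nhds] at hw
  filter_upwards [hw (ε / 2) (by linarith)] with i hi
  have h1 : ‖|y i| ⊓ u - |y i| ⊓ |v|‖ ≤ ‖|y i| - |y i|‖ + ‖u - |v|‖ :=
    norm_inf_sub_inf_le_add_norm _ _ _ _
  have h2 : ‖u - |v|‖ ≤ ‖u - v‖ := by
    calc ‖u - |v|‖ = ‖|u| - |v|‖ := by rw [abs_of_nonneg hu]
    _ ≤ ‖u - v‖ := norm_abs_sub_abs u v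
  have h3 : ‖|y i| ⊓ u‖ ≤ ‖|y i| ⊓ |v|‖ + ‖|y i| ⊓ u - |y i| ⊓ |v|‖ := by
    have := norm_add_le (|y i| ⊓ |v|) (|y i| ⊓ u - |y i| ⊓ |v|)
    simpa using this
  have hv' : ‖u - v‖ < ε / 2 := by rwa [dist_eq_norm] at hv
  rw [Real.dist_eq, sub_zero, abs_of_nonneg (norm_nonneg _)] at hi
  rw [Real.dist_eq, sub_zero, sub_zero, abs_of_nonneg (norm_nonneg _)]
  have h4 : ‖|y i| - |y i|‖ = 0 := by simp
  calc ‖|y i| ⊓ u‖ ≤ ‖|y i| ⊓ |v|‖ + ‖|y i| ⊓ u - |y i| ⊓ |v|‖ := h3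
    _ < ε := by linarith
end

section
/- Let Y be a majorizing sublattice of a normed lattice X and (y_α) a net in Y un-converging to 0 in Y. Then y_α un-converges to 0 in X. -/
open Filter Topology

/-- If `Y` is a majorizing sublattice of a normed lattice `X` and a net in `Y`
un-converges to `0` in `Y`, then it un-converges to `0` in `X`. -/
theorem unTendsto_of_unTendsto_in_majorizing_sublattice
    {ι X : Type*} [NormedAddCommGroup X] [Lattice X] [HasSolidNorm X]
    [IsOrderedAddMonoid X] [NormedSpace ℝ X]
    (Y : Submodule ℝ X) (hlat : ∀ y ∈ Y, |y| ∈ Y)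
    (hmaj : ∀ x : X, 0 ≤ x → ∃ v ∈ Y, 0 ≤ v ∧ x ≤ v)
    (l : Filter ι) (y : ι → X) (hy : ∀ i, y i ∈ Y)
    (h : ∀ v ∈ Y, 0 ≤ v → Tendsto (fun i => ‖|y i| ⊓ v‖) l (𝓝 0)) :
    UnTendsto y l 0 := by
  intro u hu
  obtain ⟨v, hvY, hv0, huv⟩ := hmaj u hu
  have hv := h v hvY hv0
  refine squeeze_zero (fun i => norm_nonneg _) (fun i => ?_) hv
  have hle : |y i - 0| ⊓ u ≤ |y i| ⊓ v := by
    rw [sub_zero]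
    exact inf_le_inf le_rfl huv
  have h0 : 0 ≤ |y i - 0| ⊓ u := le_inf (by rw [sub_zero]; exact abs_nonneg _) hu
  calc ‖|y i - 0| ⊓ u‖ ≤ ‖|y i| ⊓ v‖ := by
        apply norm_le_norm_of_abs_le_abs
        rw [abs_of_nonneg h0, abs_of_nonneg (le_inf (abs_nonneg _) hv0)]
        exact hle
    _ = ‖|y i| ⊓ v‖ := rfl
end

section
/- Let Y be a projection band in a normed lattice X and (y_α) a net in Y un-converging to 0 in Y. Then y_α un-converges to 0 in X. -/
open Filter Topology

lemma inf_add_le_aux {X : Type*} [Lattice X] [AddCommGroup X]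
    [CovariantClass X X (· + ·) (· ≤ ·)]
    {x y z : X} (hx : 0 ≤ x) (hy : 0 ≤ y) (hz : 0 ≤ z) :
    x ⊓ (y + z) ≤ x ⊓ y + x ⊓ z := by
  rw [add_inf, inf_add, inf_add]
  refine le_inf (le_inf ?_ ?_) (le_inf ?_ ?_)
  · exact le_trans inf_le_left (le_add_of_nonneg_left hx)
  · exact le_trans inf_le_left (le_add_of_nonneg_left hy)
  · exact le_trans inf_le_left (le_add_of_nonneg_right hz)
  · exact inf_le_right

/-- If `Y` is a projection band in a normed lattice `X` (a solid, order-closed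
subspace such that `X = Y ⊕ Y^d`) and a net in `Y` un-converges to `0` in `Y`,
then it un-converges to `0` in `X`. -/
theorem unTendsto_of_unTendsto_in_projection_band
    {ι X : Type*} [NormedAddCommGroup X] [Lattice X] [HasSolidNorm X] [IsOrderedAddMonoid X] [NormedSpace ℝ X]
    (Y : Submodule ℝ X)
    (hsolid : ∀ x : X, ∀ y ∈ Y, |x| ≤ |y| → x ∈ Y)
    (hband : ∀ s : Set X, s ⊆ (Y : Set X) → ∀ x : X, IsLUB s x → x ∈ Y)
    (hproj : ∀ x : X, ∃ y ∈ Y, ∃ z : X, x = y + z ∧ ∀ w ∈ Y, |z| ⊓ |w| = 0)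
    (l : Filter ι) (y : ι → X) (hy : ∀ i, y i ∈ Y)
    (h : ∀ v ∈ Y, 0 ≤ v → Tendsto (fun i => ‖|y i| ⊓ v‖) l (𝓝 0)) :
    UnTendsto y l 0 := by
  intro u hu
  obtain ⟨v, hvY, z, huvz, hz⟩ := hproj u
  have hvp_le : v ⊔ 0 ≤ |v| := sup_le (le_abs_self v) (abs_nonneg v)
  have hvpY : v ⊔ 0 ∈ Y := hsolid _ v hvY (by
    rwa [abs_of_nonneg (le_sup_right : (0:X) ≤ v ⊔ 0)])
  have hvp0 : (0:X) ≤ v ⊔ 0 := le_sup_right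
  have key : ∀ i, |y i| ⊓ u ≤ |y i| ⊓ (v ⊔ 0) := by
    intro i
    have haY : |y i| ∈ Y := hsolid _ (y i) (hy i) (by rw [abs_abs])
    have hdisj : |z| ⊓ |y i| = 0 := hz (y i) (hy i)
    have hzp0 : |y i| ⊓ (z ⊔ 0) = 0 := by
      refine le_antisymm ?_ (le_inf (abs_nonneg _) le_sup_right)
      calc |y i| ⊓ (z ⊔ 0) ≤ |y i| ⊓ |z| :=
            inf_le_inf_left _ (sup_le (le_abs_self z) (abs_nonneg z))
        _ = 0 := by rw [inf_comm]; exact hdisj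
    have h1 : u ≤ (v ⊔ 0) + (z ⊔ 0) := by
      rw [huvz]; exact add_le_add le_sup_left le_sup_left
    calc |y i| ⊓ u ≤ |y i| ⊓ ((v ⊔ 0) + (z ⊔ 0)) := inf_le_inf_left _ h1
      _ ≤ |y i| ⊓ (v ⊔ 0) + |y i| ⊓ (z ⊔ 0) :=
          inf_add_le_aux (abs_nonneg _) hvp0 le_sup_right
      _ = |y i| ⊓ (v ⊔ 0) := by rw [hzp0, add_zero]
  have hnorm : ∀ i, ‖|y i - 0| ⊓ u‖ ≤ ‖|y i| ⊓ (v ⊔ 0)‖ := by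
    intro i
    rw [sub_zero]
    apply HasSolidNorm.solid
    rw [abs_of_nonneg (le_inf (abs_nonneg _) hu),
      abs_of_nonneg (le_inf (abs_nonneg _) hvp0)]
    exact key i
  exact squeeze_zero (fun i => norm_nonneg _) hnorm (h _ hvpY hvp0)
end

section
/- Every band in a normed lattice is closed in the un-topology: if (x_α) is a net in a band B and x_α un-converges to x, then x ∈ B. -/
open Filter Topology

/-- Every band in a normed lattice is un-closed: if a net in a band `B`
un-converges to `x`, then `x ∈ B`. -/
theorem band_unClosed
    {ι X : Type*} [NormedAddCommGroup X] [Lattice X] [HasSolidNorm X] [IsOrderedAddMonoid X] [NormedSpace ℝ X]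
    (B : Submodule ℝ X)
    (hsolid : ∀ x : X, ∀ y ∈ B, |x| ≤ |y| → x ∈ B)
    (hband : ∀ s : Set X, s ⊆ (B : Set X) → ∀ x : X, IsLUB s x → x ∈ B)
    (l : Filter ι) [l.NeBot] (f : ι → X) (hf : ∀ i, f i ∈ B) (x : X)
    (h : UnTendsto f l x) : x ∈ B := by
  set g : ι → X := fun i => |f i| ⊓ |x| with hg
  -- each g i ∈ B
  have hgB : ∀ i, g i ∈ B := by
    intro i
    refine hsolid _ (f i) (hf i) ?_
    have h0 : (0 : X) ≤ g i := le_inf (abs_nonneg _) (abs_nonneg _)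
    rw [abs_of_nonneg h0]
    exact inf_le_left
  -- key inequality: 0 ≤ |x| - g i ≤ |f i - x| ⊓ |x|
  have hkey : ∀ i, |x| - g i ≤ |f i - x| ⊓ |x| := by
    intro i
    refine le_inf ?_ ?_
    · have h1 : |x| - |f i| ≤ |f i - x| := by
        calc |x| - |f i| ≤ |(|x| - |f i|)| := le_abs_self _
          _ ≤ |x - f i| := abs_abs_sub_abs_le _ _
          _ = |f i - x| := abs_sub_comm _ _
      calc |x| - g i = (|x| - |f i|) ⊔ (|x| - |x|) := by rw [hg]; simp [sub_inf]
        _ ≤ |f i - x| ⊔ (|x| - |x|) := sup_le_sup_right h1 _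
        _ = |f i - x| := by simp [abs_nonneg]
    · have : (0 : X) ≤ g i := le_inf (abs_nonneg _) (abs_nonneg _)
      exact sub_le_self _ this
  have hnonneg : ∀ i, (0 : X) ≤ |x| - g i := fun i =>
    sub_nonneg.mpr inf_le_right
  -- norm convergence of g to |x|
  have hconv : Tendsto g l (𝓝 |x|) := by
    rw [tendsto_iff_norm_sub_tendsto_zero]
    refine squeeze_zero (fun i => norm_nonneg _) (fun i => ?_) (h |x| (abs_nonneg x))
    have habs : |(g i - |x|)| ≤ |(|f i - x| ⊓ |x|)| := by
      rw [abs_sub_comm, abs_of_nonneg (hnonneg i)]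
      calc |x| - g i ≤ |f i - x| ⊓ |x| := hkey i
        _ ≤ |(|f i - x| ⊓ |x|)| := le_abs_self _
    exact norm_le_norm_of_abs_le_abs habs
  -- |x| is the LUB of the range of g
  have hlub : IsLUB (Set.range g) |x| := by
    constructor
    · rintro _ ⟨i, rfl⟩
      exact inf_le_right
    · intro z hz
      exact le_of_tendsto hconv (Eventually.of_forall fun i => hz ⟨i, rfl⟩)
  have hxB : |x| ∈ B := hband _ (by rintro _ ⟨i, rfl⟩; exact hgB i) _ hlub
  exact hsolid x |x| hxB (by rw [abs_abs])
end

section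
/- Let X be an atomic order continuous Banach lattice. Then a net x_α un-converges to x if and only if f_a(x_α) → f_a(x) for every atom a, where f_a is the coordinate functional associated with the atom a. -/
open Filter Topology

/-- `a` is an atom of a vector lattice: `a > 0` and the principal ideal
generated by `a` is `span {a}` (every `0 ≤ x ≤ a` is a scalar multiple of `a`). -/
def IsAtomElem {X : Type*} [Lattice X] [AddCommGroup X] [Module ℝ X] (a : X) : Prop :=
  0 < a ∧ ∀ x : X, 0 ≤ x → x ≤ a → ∃ c : ℝ, x = c • a

universe u

section AuxLemmas

variable {X : Type*} [NormedAddCommGroup X] [Lattice X] [HasSolidNorm X] [IsOrderedAddMonoid X]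

/-- Riesz subadditivity of the infimum on positive elements. -/
lemma riesz_inf (x y z : X) (hx : 0 ≤ x) (hy : 0 ≤ y) (hz : 0 ≤ z) :
    (y + z) ⊓ x ≤ y ⊓ x + z ⊓ x := by
  have h1 : y ⊓ x + z ⊓ x = ((y + z) ⊓ (y + x)) ⊓ ((x + z) ⊓ (x + x)) := by
    rw [inf_add y x (z ⊓ x), add_inf z x y, add_inf z x x]
  rw [h1]
  refine le_inf (le_inf inf_le_left ?_) (le_inf ?_ ?_)
  · exact inf_le_right.trans (le_add_of_nonneg_left hy)
  · exact inf_le_right.trans (le_add_of_nonneg_right hz)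
  · exact inf_le_right.trans (le_add_of_nonneg_left hx)

lemma inf_nsmul_zero {d a : X} (hd : 0 ≤ d) (ha : 0 ≤ a) (h : d ⊓ a = 0) (n : ℕ) :
    d ⊓ (n • a) = 0 := by
  induction n with
  | zero => rw [zero_nsmul]; exact inf_eq_right.2 hd
  | succ n ih =>
    have h2 := riesz_inf d (n • a) a hd (nsmul_nonneg ha n) ha
    have e1 : (n • a) ⊓ d = 0 := by rw [inf_comm]; exact ih
    have e2 : a ⊓ d = 0 := by rw [inf_comm]; exact h
    rw [e1, e2, add_zero] at h2
    refine le_antisymm ?_ (le_inf hd (nsmul_nonneg ha (n + 1)))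
    rw [inf_comm, succ_nsmul]
    exact h2

lemma nonneg_of_nsmul {a : X} {n : ℕ} (hn : n ≠ 0) (h : 0 ≤ n • a) : 0 ≤ a := by
  obtain ⟨k, rfl⟩ : ∃ k, n = k + 1 :=
    ⟨n - 1, (Nat.succ_pred_eq_of_pos (Nat.pos_of_ne_zero hn)).symm⟩
  have hd : a⁻ ⊓ ((k + 1) • a⁺) = 0 :=
    inf_nsmul_zero (negPart_nonneg a) (posPart_nonneg a)
      (by rw [inf_comm]; exact posPart_inf_negPart_eq_zero a) (k + 1)
  have h1 : (k + 1) • a⁻ ≤ (k + 1) • a⁺ := by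
    have h0 : 0 ≤ (k + 1) • a⁺ - (k + 1) • a⁻ := by
      rw [← nsmul_sub, posPart_sub_negPart]; exact h
    exact sub_nonneg.1 h0
  have h2 : a⁻ ≤ (k + 1) • a⁻ := by
    rw [succ_nsmul']
    exact le_add_of_nonneg_right (nsmul_nonneg (negPart_nonneg a) k)
  have h3 : a⁻ ≤ 0 := hd ▸ le_inf le_rfl (h2.trans h1)
  exact negPart_eq_zero.1 (le_antisymm h3 (negPart_nonneg a))

variable [NormedSpace ℝ X]

/-- Positivity of scalar multiplication, derived from closedness of the cone. -/
lemma rsmul_nonneg {c : ℝ} (hc : 0 ≤ c) {x : X} (hx : 0 ≤ x) : 0 ≤ c • x := by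
  have hrat : ∀ q : ℚ, 0 ≤ q → 0 ≤ (q : ℝ) • x := by
    intro q hq
    have hden : (q.den : ℝ) • ((q : ℝ) • x) = q.num.toNat • x := by
      rw [smul_smul]
      have e : (q.den : ℝ) * (q : ℝ) = ((q.num : ℤ) : ℝ) := by
        rw [mul_comm]; rw_mod_cast [Rat.mul_den_eq_num]
      rw [e, Int.cast_smul_eq_zsmul, ← natCast_zsmul x q.num.toNat,
        Int.toNat_of_nonneg (Rat.num_nonneg.2 hq)]
    have hden' : q.den • ((q : ℝ) • x) = q.num.toNat • x := by
      rw [← Nat.cast_smul_eq_nsmul ℝ]; exact hden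
    exact nonneg_of_nsmul q.den_nz (hden' ▸ nsmul_nonneg hx q.num.toNat)
  have hcl : IsClosed {c : ℝ | 0 ≤ c • x} :=
    isClosed_le continuous_const (continuous_id.smul continuous_const)
  have hsub : ((↑) '' {q : ℚ | 0 ≤ q} : Set ℝ) ⊆ {c : ℝ | 0 ≤ c • x} := by
    rintro _ ⟨q, hq, rfl⟩; exact hrat q hq
  have hc2 : c ∈ closure (((↑) '' {q : ℚ | 0 ≤ q} : Set ℝ)) := by
    rw [Metric.mem_closure_iff]
    intro ε hε
    obtain ⟨q, hq1, hq2⟩ := exists_rat_btwn (lt_add_of_pos_right c hε)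
    refine ⟨q, ⟨q, ?_, rfl⟩, ?_⟩
    · exact_mod_cast (hc.trans_lt hq1).le
    · rw [Real.dist_eq, abs_of_nonpos (by linarith)]; linarith
  exact closure_minimal hsub hcl hc2

lemma smul_le_smul_c {s t : ℝ} (h : s ≤ t) {a : X} (ha : 0 ≤ a) : s • a ≤ t • a := by
  have h0 := rsmul_nonneg (sub_nonneg.2 h) ha
  rw [sub_smul] at h0
  exact sub_nonneg.1 h0

lemma le_of_smul_le {a : X} (ha : 0 < a) {s t : ℝ} (h : s • a ≤ t • a) : s ≤ t := by
  by_contra hc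
  push_neg at hc
  have h1 : (s - t) • a ≤ 0 := by rw [sub_smul]; exact sub_nonpos.2 h
  have h2 : 0 ≤ (s - t)⁻¹ • -((s - t) • a) :=
    rsmul_nonneg (inv_nonneg.2 (by linarith)) (neg_nonneg.2 h1)
  rw [smul_neg, smul_smul, inv_mul_cancel₀ (sub_ne_zero.2 (ne_of_gt hc)), one_smul] at h2
  exact (lt_irrefl (0 : X)) (lt_of_lt_of_le ha (neg_nonneg.1 h2))

lemma smul_inf_smul {a : X} (ha : 0 ≤ a) (s t : ℝ) :
    (s • a) ⊓ (t • a) = min s t • a := by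
  rcases le_total s t with h | h
  · rw [min_eq_left h, inf_eq_left.2 (smul_le_smul_c h ha)]
  · rw [min_eq_right h, inf_eq_right.2 (smul_le_smul_c h ha)]

lemma atom_scalar {a : X} (ha : IsAtomElem a) {t : ℝ} (ht : 0 ≤ t) {m : X}
    (hm0 : 0 ≤ m) (hmt : m ≤ t • a) : ∃ c : ℝ, 0 ≤ c ∧ c ≤ t ∧ m = c • a := by
  rcases ht.eq_or_lt with h | h
  · subst h
    rw [zero_smul] at hmt
    exact ⟨0, le_rfl, le_rfl, by rw [zero_smul]; exact le_antisymm hmt hm0⟩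
  · obtain ⟨c', hc'⟩ := ha.2 (t⁻¹ • m) (rsmul_nonneg (inv_nonneg.2 ht) hm0) (by
      have h2 : 0 ≤ t⁻¹ • (t • a - m) := rsmul_nonneg (inv_nonneg.2 ht) (sub_nonneg.2 hmt)
      rw [smul_sub, smul_smul, inv_mul_cancel₀ h.ne', one_smul] at h2
      exact sub_nonneg.1 h2)
    have hm : m = (t * c') • a := by
      have h3 := congrArg (fun z => t • z) hc'
      simpa [smul_smul, mul_inv_cancel₀ h.ne'] using h3
    have hc0 : 0 ≤ t * c' := le_of_smul_le ha.1 (by rw [zero_smul, ← hm]; exact hm0)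
    have hct : t * c' ≤ t := le_of_smul_le ha.1 (by rw [← hm]; exact hmt)
    exact ⟨t * c', hc0, hct, hm⟩

lemma disj_smul {a : X} (ha : IsAtomElem a) {d : X} (hd : 0 ≤ d) (h : d ⊓ a = 0)
    {s : ℝ} (hs : 0 ≤ s) : d ⊓ (s • a) = 0 := by
  have hm0 : 0 ≤ d ⊓ (s • a) := le_inf hd (rsmul_nonneg hs ha.1.le)
  obtain ⟨c, hc0, hcs, hc⟩ := atom_scalar ha hs hm0 inf_le_right
  have h1 : (c • a) ⊓ a ≤ 0 := by
    have h1' : (c • a) ⊓ a ≤ d ⊓ a := inf_le_inf_right a (hc ▸ inf_le_left)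
    rw [h] at h1'; exact h1'
  have e : (c • a) ⊓ a = min c 1 • a := by
    have e' := smul_inf_smul ha.1.le c 1
    rwa [one_smul] at e'
  have h2 : min c 1 • a = 0 := by
    rw [e] at h1
    exact le_antisymm h1 (rsmul_nonneg (le_min hc0 zero_le_one) ha.1.le)
  rcases smul_eq_zero.1 h2 with h3 | h3
  · have hcz : c = 0 := by
      rcases le_total c 1 with h4 | h4
      · rwa [min_eq_left h4] at h3
      · rw [min_eq_right h4] at h3; norm_num at h3
    rw [hc, hcz, zero_smul]
  · exact absurd h3 ha.1.ne'

/-- Band decomposition of a positive element along an atom. -/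
lemma decomp {f : X → X →ₗ[ℝ] ℝ}
    (hf : ∀ a : X, IsAtomElem a → ∀ x : X, 0 ≤ x →
      0 ≤ f a x ∧ |x - f a x • a| ⊓ a = 0)
    {a : X} (ha : IsAtomElem a) {z : X} (hz : 0 ≤ z) :
    0 ≤ z - f a z • a ∧ (z - f a z • a) ⊓ a = 0 := by
  obtain ⟨hc, hdisj⟩ := hf a ha z hz
  have habs : |z - f a z • a| ⊓ (f a z • a) = 0 := disj_smul ha (abs_nonneg _) hdisj hc
  have hneg : (z - f a z • a)⁻ ≤ |z - f a z • a| ⊓ (f a z • a) := by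
    refine le_inf ?_ ?_
    · rw [← posPart_add_negPart (z - f a z • a)]
      exact le_add_of_nonneg_left (posPart_nonneg _)
    · rw [negPart_def]
      refine sup_le ?_ (rsmul_nonneg hc ha.1.le)
      rw [neg_sub]
      exact sub_le_self _ hz
  have hneg0 : (z - f a z • a)⁻ = 0 :=
    le_antisymm (habs ▸ hneg) (negPart_nonneg _)
  have hd0 : 0 ≤ z - f a z • a := negPart_eq_zero.1 hneg0
  exact ⟨hd0, by rw [← abs_of_nonneg hd0]; exact hdisj⟩

/-- The key identity: `|y| ⊓ (t • a) = min |f a y| t • a` for an atom `a`. -/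
lemma key_inf {f : X → X →ₗ[ℝ] ℝ}
    (hf : ∀ a : X, IsAtomElem a → ∀ x : X, 0 ≤ x →
      0 ≤ f a x ∧ |x - f a x • a| ⊓ a = 0)
    {a : X} (ha : IsAtomElem a) (y : X) {t : ℝ} (ht : 0 ≤ t) :
    |y| ⊓ (t • a) = min |f a y| t • a := by
  obtain ⟨hd1, hd1a⟩ := decomp hf ha (posPart_nonneg y)
  obtain ⟨hd2, hd2a⟩ := decomp hf ha (negPart_nonneg y)
  set c1 := f a (y⁺) with hc1def
  set c2 := f a (y⁻) with hc2def
  have hc1 : 0 ≤ c1 := (hf a ha (y⁺) (posPart_nonneg y)).1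
  have hc2 : 0 ≤ c2 := (hf a ha (y⁻) (negPart_nonneg y)).1
  set d1 := y⁺ - c1 • a with hd1def
  set d2 := y⁻ - c2 • a with hd2def
  have hc1a : c1 • a ≤ y⁺ := sub_nonneg.1 hd1
  have hc2a : c2 • a ≤ y⁻ := sub_nonneg.1 hd2
  have hmin : min c1 c2 = 0 := by
    have h1 : min c1 c2 • a ≤ y⁺ ⊓ y⁻ :=
      le_inf ((smul_le_smul_c (min_le_left _ _) ha.1.le).trans hc1a)
        ((smul_le_smul_c (min_le_right _ _) ha.1.le).trans hc2a)
    rw [posPart_inf_negPart_eq_zero] at h1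
    have h2 : 0 ≤ min c1 c2 • a := rsmul_nonneg (le_min hc1 hc2) ha.1.le
    rcases smul_eq_zero.1 (le_antisymm h1 h2) with h3 | h3
    · exact h3
    · exact absurd h3 ha.1.ne'
  have hfy : |f a y| = c1 + c2 := by
    have e : f a y = c1 - c2 := by
      conv_lhs => rw [← posPart_sub_negPart y]
      rw [map_sub]
    rw [e]
    rcases le_total c1 c2 with h | h
    · have e1 : c1 = 0 := by rw [← hmin, min_eq_left h]
      rw [e1, zero_sub, abs_neg, abs_of_nonneg hc2, zero_add]
    · have e2 : c2 = 0 := by rw [← hmin, min_eq_right h]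
      rw [e2, sub_zero, abs_of_nonneg hc1, add_zero]
  have hdsum0 : 0 ≤ d1 + d2 := add_nonneg hd1 hd2
  have hdsum : (d1 + d2) ⊓ a = 0 := by
    have h1 := riesz_inf a d1 d2 ha.1.le hd1 hd2
    rw [hd1a, hd2a, add_zero] at h1
    exact le_antisymm h1 (le_inf hdsum0 ha.1.le)
  have habs : |y| = (c1 + c2) • a + (d1 + d2) := by
    rw [← posPart_add_negPart y, add_smul, hd1def, hd2def]
    abel
  rw [hfy]
  refine le_antisymm ?_ ?_
  · have h1 : ((c1 + c2) • a + (d1 + d2)) ⊓ (t • a)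
        ≤ ((c1 + c2) • a) ⊓ (t • a) + (d1 + d2) ⊓ (t • a) :=
      riesz_inf (t • a) _ _ (rsmul_nonneg ht ha.1.le)
        (rsmul_nonneg (add_nonneg hc1 hc2) ha.1.le) hdsum0
    rw [smul_inf_smul ha.1.le, disj_smul ha hdsum0 hdsum ht, add_zero] at h1
    rw [habs]
    exact h1
  · refine le_inf ?_ (smul_le_smul_c (min_le_right _ _) ha.1.le)
    rw [habs]
    exact (smul_le_smul_c (min_le_left _ _) ha.1.le).trans
      (le_add_of_nonneg_right hdsum0)

end AuxLemmas

section FoldSup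

variable {X : Type*} [Lattice X] [AddCommGroup X] {A : Type*} (v : A → X)

/-- Supremum of finitely many values of `v`, together with `0`. -/
noncomputable def foldSup (F : Finset A) : X :=
  Finset.fold (α := A) (β := X) (· ⊔ ·) 0 v F

variable {v}

lemma foldSup_empty : foldSup v ∅ = 0 := Finset.fold_empty

lemma foldSup_insert [DecidableEq A] {a : A} {F : Finset A} (h : a ∉ F) :
    foldSup v (insert a F) = v a ⊔ foldSup v F := Finset.fold_insert h

lemma foldSup_nonneg (hv : ∀ a, 0 ≤ v a) (F : Finset A) : 0 ≤ foldSup v F := by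
  classical
  induction F using Finset.induction_on with
  | empty => rw [foldSup_empty]
  | @insert a F ha ih => rw [foldSup_insert ha]; exact ih.trans le_sup_right

lemma le_foldSup {a : A} {F : Finset A} (h : a ∈ F) : v a ≤ foldSup v F := by
  classical
  induction F using Finset.induction_on with
  | empty => simp at h
  | @insert b F hb ih =>
    rw [foldSup_insert hb]
    rcases Finset.mem_insert.1 h with h1 | h1
    · exact h1 ▸ le_sup_left
    · exact (ih h1).trans le_sup_right

lemma foldSup_le {z : X} (hz : 0 ≤ z) {F : Finset A} (h : ∀ a ∈ F, v a ≤ z) :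
    foldSup v F ≤ z := by
  classical
  induction F using Finset.induction_on with
  | empty => rw [foldSup_empty]; exact hz
  | @insert b F hb ih =>
    rw [foldSup_insert hb]
    exact sup_le (h b (Finset.mem_insert_self b F))
      (ih fun a ha => h a (Finset.mem_insert_of_mem ha))

lemma foldSup_mono (hv : ∀ a, 0 ≤ v a) {F G : Finset A} (h : F ⊆ G) :
    foldSup v F ≤ foldSup v G :=
  foldSup_le (foldSup_nonneg hv G) fun a ha => le_foldSup (h ha)

end FoldSup

/-- In an atomic order continuous Banach lattice, un-convergence is exactly
coordinate-wise convergence: `x_α →un x` iff `f_a (x_α) → f_a x` for every atom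
`a`, where `f_a` is the coordinate functional associated with `a` (so that
`P_a y = f_a (y) • a` is the band projection onto the band generated by `a`). -/
theorem unTendsto_iff_coordinatewise_of_atomic
    {X : Type u} [NormedAddCommGroup X] [Lattice X] [HasSolidNorm X] [IsOrderedAddMonoid X] [NormedSpace ℝ X] [CompleteSpace X]
    (hoc : ∀ (κ : Type u) [SemilatticeSup κ] [Nonempty κ] (g : κ → X),
      Antitone g → IsGLB (Set.range g) 0 → Tendsto (fun i => ‖g i‖) atTop (𝓝 0))
    (f : X → X →ₗ[ℝ] ℝ)
    (hf : ∀ a : X, IsAtomElem a → ∀ x : X, 0 ≤ x →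
      0 ≤ f a x ∧ |x - f a x • a| ⊓ a = 0)
    (hatomic : ∀ x : X, 0 ≤ x →
      IsLUB ((fun a => f a x • a) '' {a : X | IsAtomElem a}) x)
    {ι : Type*} (l : Filter ι) (g : ι → X) (x : X) :
    UnTendsto g l x ↔
      ∀ a : X, IsAtomElem a → Tendsto (fun i => f a (g i)) l (𝓝 (f a x)) := by
  constructor
  · intro h a ha
    have hna : (0 : ℝ) < ‖a‖ := norm_pos_iff.2 ha.1.ne'
    rw [Metric.tendsto_nhds]
    intro ε hε
    have hδ : 0 < min ε 1 * ‖a‖ := mul_pos (lt_min hε one_pos) hna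
    filter_upwards [(h a ha.1.le).eventually (gt_mem_nhds hδ)] with i hi
    rw [Real.dist_eq, ← map_sub]
    have hk : |g i - x| ⊓ a = min |f a (g i - x)| 1 • a := by
      have hk' := key_inf hf ha (g i - x) (zero_le_one (α := ℝ))
      rwa [one_smul] at hk'
    rw [hk, norm_smul, Real.norm_eq_abs,
      abs_of_nonneg (le_min (abs_nonneg _) zero_le_one)] at hi
    have h2 : min |f a (g i - x)| 1 < min ε 1 := lt_of_mul_lt_mul_right hi hna.le
    rcases lt_or_ge |f a (g i - x)| 1 with h3 | h3
    · rw [min_eq_left h3.le] at h2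
      exact h2.trans_le (min_le_left _ _)
    · rw [min_eq_right h3] at h2
      exact absurd h2 (not_lt.2 (min_le_right ε 1))
  · intro h u hu
    classical
    rw [Metric.tendsto_nhds]
    intro ε hε
    set A := {a : X // IsAtomElem a} with hA
    set v : A → X := fun a => f a.1 u • a.1 with hv
    have hv0 : ∀ a : A, 0 ≤ v a := fun a => rsmul_nonneg (hf a.1 a.2 u hu).1 a.2.1.le
    have hvu : ∀ a : A, v a ≤ u := fun a => sub_nonneg.1 (decomp hf a.2 hu).1
    have hWu : ∀ F : Finset A, foldSup v F ≤ u := fun F =>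
      foldSup_le hu fun a _ => hvu a
    set q : Finset A → X := fun F => u - foldSup v F with hq
    have hqa : Antitone q := fun F G hFG => sub_le_sub_left (foldSup_mono hv0 hFG) u
    have hq0 : ∀ F, 0 ≤ q F := fun F => sub_nonneg.2 (hWu F)
    have hglb : IsGLB (Set.range q) 0 := by
      constructor
      · rintro _ ⟨F, rfl⟩
        exact hq0 F
      · intro b hb
        have hub : u - b ∈ upperBounds ((fun a => f a u • a) '' {a : X | IsAtomElem a}) := by
          rintro _ ⟨a, ha, rfl⟩
          have h1 : b ≤ q {⟨a, ha⟩} := hb ⟨({⟨a, ha⟩} : Finset A), rfl⟩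
          simp only [hq] at h1
          have h2 : v ⟨a, ha⟩ ≤ foldSup v {⟨a, ha⟩} :=
            le_foldSup (Finset.mem_singleton_self _)
          exact h2.trans (le_sub_comm.1 h1)
        have h4 : u ≤ u - b := (hatomic u hu).2 hub
        have h5 : b ≤ u - u := le_sub_comm.1 h4
        simpa using h5
    have htend := hoc (Finset A) q hqa hglb
    obtain ⟨F, hF⟩ := (htend.eventually (gt_mem_nhds (half_pos hε))).exists
    have hsum : Tendsto (fun i => ∑ a ∈ F, |f a.1 (g i) - f a.1 x| * ‖a.1‖) l (𝓝 0) := by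
      have h0 : ∀ a : A, a ∈ F →
          Tendsto (fun i => |f a.1 (g i) - f a.1 x| * ‖a.1‖) l (𝓝 0) := by
        intro a _
        have h1 : Tendsto (fun i => f a.1 (g i) - f a.1 x) l (𝓝 0) := by
          simpa using (h a.1 a.2).sub_const (f a.1 x)
        simpa using h1.abs.mul_const ‖a.1‖
      have h2 := tendsto_finset_sum F h0
      simpa using h2
    filter_upwards [hsum.eventually (gt_mem_nhds (half_pos hε))] with i hi
    rw [Real.dist_eq, sub_zero, abs_norm]
    set y := g i - x with hy
    have hWsum : ∀ G : Finset A, |y| ⊓ foldSup v G ≤ ∑ a ∈ G, |f a.1 y| • a.1 := by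
      intro G
      induction G using Finset.induction_on with
      | empty =>
        rw [foldSup_empty, Finset.sum_empty]
        exact le_of_eq (inf_eq_right.2 (abs_nonneg y))
      | @insert a G ha ih =>
        rw [foldSup_insert ha, Finset.sum_insert ha]
        have h1 : v a ⊔ foldSup v G ≤ v a + foldSup v G :=
          sup_le (le_add_of_nonneg_right (foldSup_nonneg hv0 G))
            (le_add_of_nonneg_left (hv0 a))
        have h3 : (v a + foldSup v G) ⊓ |y| ≤ v a ⊓ |y| + foldSup v G ⊓ |y| :=
          riesz_inf |y| (v a) (foldSup v G) (abs_nonneg y) (hv0 a) (foldSup_nonneg hv0 G)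
        have h4 : |y| ⊓ v a ≤ |f a.1 y| • a.1 := by
          have hk := key_inf hf a.2 y (hf a.1 a.2 u hu).1
          calc |y| ⊓ v a = min |f a.1 y| (f a.1 u) • a.1 := hk
            _ ≤ |f a.1 y| • a.1 := smul_le_smul_c (min_le_left _ _) a.2.1.le
        calc |y| ⊓ (v a ⊔ foldSup v G) ≤ |y| ⊓ (v a + foldSup v G) :=
              inf_le_inf_left _ h1
          _ = (v a + foldSup v G) ⊓ |y| := inf_comm _ _
          _ ≤ v a ⊓ |y| + foldSup v G ⊓ |y| := h3
          _ = |y| ⊓ v a + |y| ⊓ foldSup v G := by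
              rw [inf_comm (v a) |y|, inf_comm (foldSup v G) |y|]
          _ ≤ |f a.1 y| • a.1 + ∑ a ∈ G, |f a.1 y| • a.1 := add_le_add h4 ih
    have hSnn : 0 ≤ ∑ a ∈ F, |f a.1 y| • a.1 :=
      Finset.sum_nonneg fun a _ => rsmul_nonneg (abs_nonneg _) a.2.1.le
    have hbound : |y| ⊓ u ≤ (∑ a ∈ F, |f a.1 y| • a.1) + q F := by
      have hu' : u = foldSup v F + q F := by simp only [hq]; abel
      calc |y| ⊓ u = (foldSup v F + q F) ⊓ |y| := by rw [← hu', inf_comm]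
        _ ≤ foldSup v F ⊓ |y| + q F ⊓ |y| :=
            riesz_inf |y| _ _ (abs_nonneg y) (foldSup_nonneg hv0 F) (hq0 F)
        _ ≤ (∑ a ∈ F, |f a.1 y| • a.1) + q F :=
            add_le_add (by rw [inf_comm]; exact hWsum F) inf_le_left
    have hnorm : ‖|y| ⊓ u‖ ≤ ‖(∑ a ∈ F, |f a.1 y| • a.1) + q F‖ := by
      apply HasSolidNorm.solid
      rw [abs_of_nonneg (le_inf (abs_nonneg y) hu),
        abs_of_nonneg (add_nonneg hSnn (hq0 F))]
      exact hbound
    have hnorm2 : ‖(∑ a ∈ F, |f a.1 y| • a.1) + q F‖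
        ≤ (∑ a ∈ F, |f a.1 y| * ‖a.1‖) + ‖q F‖ := by
      refine (norm_add_le _ _).trans (add_le_add ?_ le_rfl)
      refine (norm_sum_le _ _).trans ?_
      refine Finset.sum_le_sum fun a _ => ?_
      rw [norm_smul, Real.norm_eq_abs, abs_abs]
    have hfin : (∑ a ∈ F, |f a.1 y| * ‖a.1‖)
        = ∑ a ∈ F, |f a.1 (g i) - f a.1 x| * ‖a.1‖ :=
      Finset.sum_congr rfl fun a _ => by rw [hy, map_sub]
    calc ‖|y| ⊓ u‖ ≤ ‖(∑ a ∈ F, |f a.1 y| • a.1) + q F‖ := hnorm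
      _ ≤ (∑ a ∈ F, |f a.1 y| * ‖a.1‖) + ‖q F‖ := hnorm2
      _ < ε / 2 + ε / 2 := add_lt_add (hfin ▸ hi) hF
      _ = ε := add_halves ε
end

section
/- The set of all un-continuous linear functionals on a Banach lattice X is an ideal in the dual X*; in particular, if φ is un-continuous then |φ| is un-continuous. -/
open Filter Topology

universe u

/-- A continuous linear functional is un-continuous if it carries un-null nets to
null nets of reals. -/
def UnContinuous {X : Type u} [NormedAddCommGroup X] [Lattice X] [HasSolidNorm X] [IsOrderedAddMonoid X] [NormedSpace ℝ X]
    (φ : X →L[ℝ] ℝ) : Prop :=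
  ∀ (ι : Type u) (l : Filter ι) (f : ι → X),
    UnTendsto f l 0 → Tendsto (fun i => φ (f i)) l (𝓝 0)

/-- The value of the modulus `|φ|` at `x ≥ 0`, given by the Riesz–Kantorovich
formula `|φ|(x) = sup {|φ y| : |y| ≤ x}`. -/
noncomputable def modulusAt {X : Type u} [NormedAddCommGroup X] [Lattice X] [HasSolidNorm X] [IsOrderedAddMonoid X]
    [NormedSpace ℝ X] (φ : X →L[ℝ] ℝ) (x : X) : ℝ :=
  sSup {r : ℝ | ∃ y : X, |y| ≤ x ∧ r = |φ y|}

section Aux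

variable {X : Type u} [NormedAddCommGroup X] [Lattice X] [HasSolidNorm X] [IsOrderedAddMonoid X] [NormedSpace ℝ X]

lemma modulusAt_bddAbove (φ : X →L[ℝ] ℝ) (x : X) :
    BddAbove {r : ℝ | ∃ y : X, |y| ≤ x ∧ r = |φ y|} := by
  refine ⟨‖φ‖ * ‖x‖, ?_⟩
  rintro r ⟨y, hy, rfl⟩
  have h0 : (0 : X) ≤ x := le_trans (abs_nonneg y) hy
  have hyx : |y| ≤ |x| := by rwa [abs_of_nonneg h0]
  have : ‖y‖ ≤ ‖x‖ := HasSolidNorm.solid hyx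
  calc |φ y| ≤ ‖φ‖ * ‖y‖ := φ.le_opNorm y
    _ ≤ ‖φ‖ * ‖x‖ := mul_le_mul_of_nonneg_left this (norm_nonneg φ)

lemma zero_mem_modulusSet (φ : X →L[ℝ] ℝ) {x : X} (hx : 0 ≤ x) :
    (0 : ℝ) ∈ {r : ℝ | ∃ y : X, |y| ≤ x ∧ r = |φ y|} :=
  ⟨0, by simpa using hx, by simp⟩

lemma abs_apply_le_modulusAt (φ : X →L[ℝ] ℝ) (x : X) :
    |φ x| ≤ modulusAt φ |x| :=
  le_csSup (modulusAt_bddAbove φ |x|) ⟨x, le_rfl, rfl⟩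

lemma modulusAt_nonneg (φ : X →L[ℝ] ℝ) {x : X} (hx : 0 ≤ x) :
    0 ≤ modulusAt φ x :=
  le_csSup (modulusAt_bddAbove φ x) (zero_mem_modulusSet φ hx)

/-- Key lemma: if `φ` is un-continuous and `f` is un-null, then
`modulusAt φ |f i| → 0`. -/
lemma key {X : Type u} [NormedAddCommGroup X] [Lattice X] [HasSolidNorm X] [IsOrderedAddMonoid X] [NormedSpace ℝ X]
    (φ : X →L[ℝ] ℝ) (hφ : UnContinuous φ) {ι : Type u} (l : Filter ι)
    (f : ι → X) (hf : UnTendsto f l 0) :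
    Tendsto (fun i => modulusAt φ |f i|) l (𝓝 0) := by
  have hch : ∀ i : ι, ∃ y : X, |y| ≤ |f i| ∧ modulusAt φ |f i| ≤ 2 * |φ y| := by
    intro i
    rcases lt_or_ge 0 (modulusAt φ |f i|) with hm | hm
    · have hlt : modulusAt φ |f i| / 2 < modulusAt φ |f i| := by linarith
      obtain ⟨r, ⟨y, hy, rfl⟩, hr⟩ :=
        exists_lt_of_lt_csSup ⟨0, zero_mem_modulusSet φ (abs_nonneg (f i))⟩ hlt
      exact ⟨y, hy, by linarith⟩
    · exact ⟨0, by simp, by simpa using hm⟩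
  choose y hyle hymod using hch
  have hyun : UnTendsto y l 0 := by
    intro u hu
    refine squeeze_zero (fun i => norm_nonneg _) (fun i => ?_) (hf u hu)
    have h1 : (0 : X) ≤ |y i - 0| ⊓ u := le_inf (abs_nonneg _) hu
    have h2 : |y i - 0| ⊓ u ≤ |f i - 0| ⊓ u := by
      simp only [sub_zero]
      exact inf_le_inf_right u (hyle i)
    refine HasSolidNorm.solid ?_
    rw [abs_of_nonneg h1, abs_of_nonneg (le_trans h1 h2)]
    exact h2
  have hφy : Tendsto (fun i => 2 * |φ (y i)|) l (𝓝 0) := by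
    have := ((hφ ι l y hyun).abs).const_mul 2
    simpa using this
  exact squeeze_zero (fun i => modulusAt_nonneg φ (abs_nonneg _)) hymod hφy

end Aux

/-- The un-continuous functionals form an ideal in the dual: they are closed
under addition and scalar multiplication, the set is solid (if `|ψ| ≤ |φ|`
pointwise on positives, via the Riesz–Kantorovich formula, and `φ` is
un-continuous then so is `ψ`); in particular, if `φ` is un-continuous then its
modulus `|φ|` is un-continuous. -/
theorem unContinuous_functionals_form_ideal
    {X : Type u} [NormedAddCommGroup X] [Lattice X] [HasSolidNorm X] [IsOrderedAddMonoid X] [NormedSpace ℝ X] [CompleteSpace X] :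
    (∀ φ ψ : X →L[ℝ] ℝ, UnContinuous φ → UnContinuous ψ → UnContinuous (φ + ψ)) ∧
    (∀ (c : ℝ) (φ : X →L[ℝ] ℝ), UnContinuous φ → UnContinuous (c • φ)) ∧
    (∀ φ ψ : X →L[ℝ] ℝ, UnContinuous φ →
      (∀ x : X, 0 ≤ x → modulusAt ψ x ≤ modulusAt φ x) → UnContinuous ψ) ∧
    (∀ φ θ : X →L[ℝ] ℝ, UnContinuous φ →
      (∀ x : X, 0 ≤ x → θ x = modulusAt φ x) → UnContinuous θ) := by
  refine ⟨?_, ?_, ?_, ?_⟩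
  · intro φ ψ hφ hψ ι l f hf
    have := (hφ ι l f hf).add (hψ ι l f hf)
    simpa using this
  · intro c φ hφ ι l f hf
    have := (hφ ι l f hf).const_mul c
    simpa using this
  · intro φ ψ hφ hle ι l f hf
    have hkey := key φ hφ l f hf
    refine squeeze_zero_norm (fun i => ?_) hkey
    rw [Real.norm_eq_abs]
    exact (abs_apply_le_modulusAt ψ (f i)).trans (hle _ (abs_nonneg _))
  · intro φ θ hφ hθ ι l f hf
    have hpos : UnTendsto (fun i => (f i)⁺) l 0 := by
      intro u hu
      refine squeeze_zero (fun i => norm_nonneg _) (fun i => ?_) (hf u hu)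
      have hple : (f i)⁺ ≤ |f i| := by
        rw [posPart_def]
        exact sup_le (le_abs_self _) (abs_nonneg _)
      have h1 : (0 : X) ≤ |(f i)⁺ - 0| ⊓ u := le_inf (abs_nonneg _) hu
      have h2 : |(f i)⁺ - 0| ⊓ u ≤ |f i - 0| ⊓ u := by
        simp only [sub_zero, abs_of_nonneg (posPart_nonneg (f i))]
        exact inf_le_inf_right u hple
      refine HasSolidNorm.solid ?_
      rw [abs_of_nonneg h1, abs_of_nonneg (le_trans h1 h2)]
      exact h2
    have hneg : UnTendsto (fun i => (f i)⁻) l 0 := by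
      intro u hu
      refine squeeze_zero (fun i => norm_nonneg _) (fun i => ?_) (hf u hu)
      have hple : (f i)⁻ ≤ |f i| := by
        rw [negPart_def]
        exact sup_le (neg_le_abs _) (abs_nonneg _)
      have h1 : (0 : X) ≤ |(f i)⁻ - 0| ⊓ u := le_inf (abs_nonneg _) hu
      have h2 : |(f i)⁻ - 0| ⊓ u ≤ |f i - 0| ⊓ u := by
        simp only [sub_zero, abs_of_nonneg (negPart_nonneg (f i))]
        exact inf_le_inf_right u hple
      refine HasSolidNorm.solid ?_
      rw [abs_of_nonneg h1, abs_of_nonneg (le_trans h1 h2)]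
      exact h2
    have h1 : Tendsto (fun i => modulusAt φ ((f i)⁺)) l (𝓝 0) := by
      have := key φ hφ l (fun i => (f i)⁺) hpos
      simpa [abs_of_nonneg (posPart_nonneg _)] using this
    have h2 : Tendsto (fun i => modulusAt φ ((f i)⁻)) l (𝓝 0) := by
      have := key φ hφ l (fun i => (f i)⁻) hneg
      simpa [abs_of_nonneg (negPart_nonneg _)] using this
    have heq : ∀ i, θ (f i) = modulusAt φ ((f i)⁺) - modulusAt φ ((f i)⁻) := by
      intro i
      rw [← hθ _ (posPart_nonneg _), ← hθ _ (negPart_nonneg _), ← map_sub,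
        posPart_sub_negPart]
    have := h1.sub h2
    simp only [sub_zero] at this
    rw [show (0 : ℝ) = 0 - 0 by ring] at this ⊢
    simpa [heq] using this
end
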